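/- arXiv:2112.08953 — 6 statements merged into one kernel-verified Lean document; each statement's English description precedes it below -/
import Mathlib

section
/- Every finite tree (viewed as a trigraph with all edges black and no red edges) has twin-width at most 2. -/
/-- A *trigraph*: a vertex set with disjoint sets of black edges and red edges. -/
structure Trigraph (V : Type) where
  black : SimpleGraph V
  red : SimpleGraph V
  disj : ∀ u v : V, black.Adj u v → ¬ red.Adj u v

namespace Trigraph

variable {V W : Type}

/-- Adjacency in the total graph of a trigraph. -/
def TotAdj (G : Trigraph V) (u v : V) : Prop :=
  G.black.Adj u v ∨ G.red.Adj u v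

theorem totAdj_symm (G : Trigraph V) {u v : V} (h : G.TotAdj u v) : G.TotAdj v u :=
  Or.imp (fun h' => h'.symm) (fun h' => h'.symm) h

/-- The trigraph associated with a partition (setoid) of the vertex set of `G`:
two distinct parts are joined by a black edge if every pair between them is a black
edge of `G`, and by a red edge if some pair between them is (black or red) adjacent
but not every pair is a black edge. This is the trigraph obtained by contracting
every part of the partition. -/
def quot (G : Trigraph V) (P : Setoid V) : Trigraph (Quotient P) where
  black :=
    { Adj := fun XX YY => XX ≠ YY ∧
        ∀ a b : V, Quotient.mk P a = XX → Quotient.mk P b = YY → G.black.Adj a b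
      symm := ⟨fun XX YY h => ⟨h.1.symm, fun a b ha hb => (h.2 b a hb ha).symm⟩⟩
      loopless := ⟨fun XX h => h.1 rfl⟩ }
  red :=
    { Adj := fun XX YY => XX ≠ YY ∧
        (¬ ∀ a b : V, Quotient.mk P a = XX → Quotient.mk P b = YY → G.black.Adj a b) ∧
        ∃ a b : V, Quotient.mk P a = XX ∧ Quotient.mk P b = YY ∧ G.TotAdj a b
      symm := ⟨fun XX YY h => ⟨h.1.symm,
        fun hc => h.2.1 (fun a b ha hb => (hc b a hb ha).symm), by
          obtain ⟨a, b2, ha, hb, hab⟩ := h.2.2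
          exact ⟨b2, a, hb, ha, totAdj_symm G hab⟩⟩⟩
      loopless := ⟨fun XX h => h.1 rfl⟩ }
  disj := fun XX YY hb hr => hr.2.1 hb.2

/-- The setoid obtained from `P` by merging the classes of `u` and `v`. -/
def mergeSetoid (P : Setoid V) (u v : V) : Setoid V where
  r a b := P.r a b ∨ (P.r a u ∧ P.r v b) ∨ (P.r a v ∧ P.r u b)
  iseqv := by
    constructor
    · exact fun a => Or.inl (P.iseqv.refl a)
    · rintro a b (h | ⟨h1, h2⟩ | ⟨h1, h2⟩)
      · exact Or.inl (P.iseqv.symm h)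
      · exact Or.inr (Or.inr ⟨P.iseqv.symm h2, P.iseqv.symm h1⟩)
      · exact Or.inr (Or.inl ⟨P.iseqv.symm h2, P.iseqv.symm h1⟩)
    · rintro a b c (h | ⟨h1, h2⟩ | ⟨h1, h2⟩) (g | ⟨g1, g2⟩ | ⟨g1, g2⟩)
      · exact Or.inl (P.iseqv.trans h g)
      · exact Or.inr (Or.inl ⟨P.iseqv.trans h g1, g2⟩)
      · exact Or.inr (Or.inr ⟨P.iseqv.trans h g1, g2⟩)
      · exact Or.inr (Or.inl ⟨h1, P.iseqv.trans h2 g⟩)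
      · exact Or.inl (P.iseqv.trans h1
          (P.iseqv.trans (P.iseqv.symm (P.iseqv.trans h2 g1)) g2))
      · exact Or.inl (P.iseqv.trans h1 g2)
      · exact Or.inr (Or.inr ⟨h1, P.iseqv.trans h2 g⟩)
      · exact Or.inl (P.iseqv.trans h1 g2)
      · exact Or.inl (P.iseqv.trans h1
          (P.iseqv.trans (P.iseqv.symm (P.iseqv.trans h2 g1)) g2))

/-- `Q` is obtained from `P` by merging two distinct parts. -/
def MergeStep (P Q : Setoid V) : Prop :=
  ∃ u v : V, ¬ P.r u v ∧ Q = mergeSetoid P u v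

/-- The trigraph `G` has red degree at most `d`. -/
def RedDegLE (G : Trigraph V) (d : ℕ) : Prop :=
  ∀ x : V, (G.red.neighborSet x).ncard ≤ d

/-- A partial contraction sequence, recorded as the list of successive partitions of
the vertex set: it starts at the discrete partition and each partition is obtained
from the previous one by merging two parts (i.e. by one contraction). -/
def IsPartialContractionSeq (L : List (Setoid V)) : Prop :=
  L.head? = some ⊥ ∧ L.Chain' MergeStep

/-- A partial `d`-sequence of the trigraph `G`: a partial contraction sequence all of
whose associated trigraphs have red degree at most `d`. -/
def IsPartialSeq (G : Trigraph V) (d : ℕ) (L : List (Setoid V)) : Prop :=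
  IsPartialContractionSeq L ∧ ∀ P ∈ L, (G.quot P).RedDegLE d

/-- A (complete) `d`-sequence of the trigraph `G`: a partial `d`-sequence ending at
the one-vertex trigraph, i.e. at the partition with a single part. -/
def IsSeq (G : Trigraph V) (d : ℕ) (L : List (Setoid V)) : Prop :=
  G.IsPartialSeq d L ∧ L.getLast? = some ⊤

/-- `G` admits a `d`-sequence. -/
def HasSeq (G : Trigraph V) (d : ℕ) : Prop := ∃ L, G.IsSeq d L

/-- The twin-width of a trigraph: the least `d` such that it admits a `d`-sequence. -/
noncomputable def tww (G : Trigraph V) : ℕ := sInf {d | G.HasSeq d}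

/-- The induced subtrigraph on a set of vertices. -/
def induce (G : Trigraph V) (W : Set V) : Trigraph W where
  black := SimpleGraph.induce W G.black
  red := SimpleGraph.induce W G.red
  disj := fun u v hb hr => G.disj u v hb hr

/-- An isomorphism of trigraphs: a vertex bijection preserving black edges, red
edges, and non-edges. -/
structure Iso (G : Trigraph V) (H : Trigraph W) where
  toEquiv : V ≃ W
  black_iff : ∀ a b : V, H.black.Adj (toEquiv a) (toEquiv b) ↔ G.black.Adj a b
  red_iff : ∀ a b : V, H.red.Adj (toEquiv a) (toEquiv b) ↔ G.red.Adj a b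

/-- A graph, viewed as a trigraph with no red edges. -/
def ofGraph (G : SimpleGraph V) : Trigraph V :=
  ⟨G, ⊥, fun _ _ _ h => h⟩

end Trigraph


namespace TwwTree


variable {V : Type} (G : SimpleGraph V)

/-- Reachability within a vertex set `S`. -/
def ReachIn (S : Set V) : V → V → Prop :=
  Relation.ReflTransGen (fun x y => x ∈ S ∧ y ∈ S ∧ G.Adj x y)

lemma reachIn_symm {S : Set V} {a b : V} (h : ReachIn G S a b) : ReachIn G S b a :=
  @Std.Symm.symm _ _ (@Relation.ReflTransGen.stdSymm _ (fun x y => x ∈ S ∧ y ∈ S ∧ G.Adj x y)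
    ⟨fun _ _ hxy => ⟨hxy.2.1, hxy.1, hxy.2.2.symm⟩⟩) _ _ h

lemma reachIn_mem {S : Set V} {a b : V} (h : ReachIn G S a b) :
    a = b ∨ (a ∈ S ∧ b ∈ S) := by
  induction h with
  | refl => exact Or.inl rfl
  | tail h step ih =>
    rcases ih with rfl | ⟨ha, _⟩
    · exact Or.inr ⟨step.1, step.2.1⟩
    · exact Or.inr ⟨ha, step.2.1⟩

lemma reachIn_mono {S T : Set V} (hST : S ⊆ T) {a b : V} (h : ReachIn G S a b) :
    ReachIn G T a b :=
  Relation.ReflTransGen.mono (r := fun x y => x ∈ S ∧ y ∈ S ∧ G.Adj x y)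
    (p := fun x y => x ∈ T ∧ y ∈ T ∧ G.Adj x y)
    (fun _ _ hxy => ⟨hST hxy.1, hST hxy.2.1, hxy.2.2⟩) _ _ h

/-- From a `ReachIn` chain avoiding `r`, build a walk all of whose vertices differ
from `r` (given the endpoints differ from `r`). -/
lemma reachIn_walk {S : Set V} {r c c' : V} (hc : c ≠ r)
    (h : ReachIn G (S \ {r}) c c') :
    ∃ w : G.Walk c c', ∀ x ∈ w.support, x ≠ r := by
  induction h with
  | refl => exact ⟨SimpleGraph.Walk.nil, by simp [hc]⟩
  | tail h step ih =>
    obtain ⟨w, hw⟩ := ih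
    refine ⟨w.concat step.2.2, ?_⟩
    intro x hx
    rw [SimpleGraph.Walk.support_concat, List.mem_append] at hx
    rcases hx with hx | hx
    · exact hw x hx
    · simp only [List.mem_singleton] at hx
      subst hx
      exact step.2.1.2

/-- The key consequence of acyclicity: two neighbours of `r` which are connected
avoiding `r` must be equal. -/
lemma attach_unique (hA : G.IsAcyclic) {S : Set V} {r c c' : V}
    (hc : G.Adj r c) (hc' : G.Adj r c')
    (h : ReachIn G (S \ {r}) c c') : c = c' := by
  classical
  by_contra hne
  obtain ⟨w, hw⟩ := reachIn_walk G (G.ne_of_adj hc).symm h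
  set p := w.bypass with hp
  have hps : ∀ x ∈ p.support, x ≠ r := fun x hx => hw x (w.support_bypass_subset hx)
  have hpath : p.IsPath := w.bypass_isPath
  -- q : walk from c to r
  set q := p.concat hc'.symm with hq
  have hqpath : q.IsPath := by
    rw [SimpleGraph.Walk.isPath_def, hq, SimpleGraph.Walk.support_concat,
      List.nodup_append]
    refine ⟨hpath.support_nodup, List.nodup_singleton r, ?_⟩
    intro x hx y hy
    simp only [List.mem_singleton] at hy
    subst hy
    exact hps x hx
  have hcyc : (SimpleGraph.Walk.cons hc q).IsCycle := by
    rw [SimpleGraph.Walk.cons_isCycle_iff]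
    refine ⟨hqpath, ?_⟩
    rw [hq, SimpleGraph.Walk.edges_concat, List.concat_eq_append, List.mem_append]
    rintro (hmem | hmem)
    · exact hps r (p.fst_mem_support_of_mem_edges hmem) rfl
    · rw [List.mem_singleton, Sym2.eq_iff] at hmem
      rcases hmem with ⟨h1, h2⟩ | ⟨h1, h2⟩
      · exact G.irrefl (h1 ▸ hc')
      · exact hne h2
  exact hA _ hcyc

/-- Decompose reachability from `r`: any vertex of `S` other than `r` is reached
from a neighbour `c` of `r` avoiding `r`. -/
lemma reach_decomp {S : Set V} {r x : V} (h : ReachIn G S r x) (hne : x ≠ r) :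
    ∃ c, G.Adj r c ∧ c ∈ S ∧ ReachIn G (S \ {r}) c x := by
  induction h with
  | refl => exact absurd rfl hne
  | @tail y z h step ih =>
    by_cases hy : y = r
    · subst hy
      exact ⟨z, step.2.2, step.2.1, Relation.ReflTransGen.refl⟩
    · obtain ⟨c, h1, h2, h3⟩ := ih hy
      exact ⟨c, h1, h2, h3.tail ⟨⟨step.1, hy⟩, ⟨step.2.1, hne⟩, step.2.2⟩⟩

lemma reach_into_comp {Sr : Set V} {c : V} :
    ∀ {x}, ReachIn G Sr c x → ReachIn G {y | ReachIn G Sr c y} c x := by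
  intro x h
  induction h with
  | refl => exact Relation.ReflTransGen.refl
  | @tail y z h step ih =>
    exact ih.tail ⟨h, h.tail step, step.2.2⟩




lemma bot_r {a b : V} : (⊥ : Setoid V).r a b ↔ a = b := Iff.rfl

/-- The setoid collapsing the set `A` to a single class. -/
def collapse (A : Set V) : Setoid V where
  r a b := a = b ∨ (a ∈ A ∧ b ∈ A)
  iseqv := by
    constructor
    · exact fun a => Or.inl rfl
    · rintro a b (rfl | ⟨h1, h2⟩)
      · exact Or.inl rfl
      · exact Or.inr ⟨h2, h1⟩
    · rintro a b c (rfl | ⟨h1, h2⟩) (rfl | ⟨g1, g2⟩)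
      · exact Or.inl rfl
      · exact Or.inr ⟨g1, g2⟩
      · exact Or.inr ⟨h1, h2⟩
      · exact Or.inr ⟨h1, g2⟩

lemma collapse_r {A : Set V} {a b : V} :
    (collapse A).r a b ↔ a = b ∨ (a ∈ A ∧ b ∈ A) := Iff.rfl

lemma collapse_empty : collapse (∅ : Set V) = ⊥ := by
  apply Setoid.ext; intro a b
  constructor
  · rintro (rfl | ⟨h, _⟩)
    · rfl
    · exact absurd h (Set.notMem_empty a)
  · rintro rfl; exact Or.inl rfl

lemma collapse_singleton (r : V) : collapse ({r} : Set V) = ⊥ := by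
  apply Setoid.ext; intro a b
  constructor
  · rintro (rfl | ⟨h1, h2⟩)
    · rfl
    · simp only [Set.mem_singleton_iff] at h1 h2; rw [h1, h2]
  · rintro rfl; exact Or.inl rfl

lemma collapse_univ : collapse (Set.univ : Set V) = ⊤ := by
  apply Setoid.ext; intro a b
  constructor
  · intro _; trivial
  · intro _; exact Or.inr ⟨trivial, trivial⟩

/-- classes of `P` are trivial or contained in `S`. -/
def SubS (P : Setoid V) (S : Set V) : Prop :=
  ∀ x y, P.r x y → x = y ∨ (x ∈ S ∧ y ∈ S)

lemma subS_mono {P : Setoid V} {S T : Set V} (h : SubS P S) (hST : S ⊆ T) :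
    SubS P T := fun x y hxy => (h x y hxy).imp id (fun h' => ⟨hST h'.1, hST h'.2⟩)

lemma subS_bot (S : Set V) : SubS (⊥ : Setoid V) S := fun _ _ h => Or.inl h

lemma subS_collapse (A : Set V) : SubS (collapse A) A := fun _ _ h => h

/-- `x`'s class in `P` is a singleton. -/
def Triv (P : Setoid V) (x : V) : Prop := ∀ y, P.r y x → y = x

lemma triv_of_subS {P : Setoid V} {S : Set V} (h : SubS P S) {x : V} (hx : x ∉ S) :
    Triv P x := fun y hyx => by
  rcases h y x hyx with rfl | ⟨_, h2⟩
  · rfl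
  · exact absurd h2 hx

/-- Compatibility: gluing `collapse A` onto `P` keeps an equivalence. -/
def Compat (P : Setoid V) (A : Set V) : Prop :=
  ∀ x y, P.r x y → x = y ∨ (x ∉ A ∧ y ∉ A)

lemma compat_of_subS {P : Setoid V} {S A : Set V} (h : SubS P S)
    (hd : ∀ x, x ∈ S → x ∉ A) : Compat P A :=
  fun x y hxy => (h x y hxy).imp id (fun h' => ⟨hd x h'.1, hd y h'.2⟩)

/-- Gluing the collapse of `A` onto a setoid `P` (junk value if incompatible). -/
noncomputable def glue (P : Setoid V) (A : Set V) : Setoid V := by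
  classical
  exact if h : Equivalence (fun a b => P.r a b ∨ (a ∈ A ∧ b ∈ A)) then ⟨_, h⟩ else P

lemma glue_equiv {P : Setoid V} {A : Set V} (h : Compat P A) :
    Equivalence (fun a b => P.r a b ∨ (a ∈ A ∧ b ∈ A)) := by
  constructor
  · exact fun a => Or.inl (P.iseqv.refl a)
  · rintro a b (hab | ⟨h1, h2⟩)
    · exact Or.inl (P.iseqv.symm hab)
    · exact Or.inr ⟨h2, h1⟩
  · rintro a b c (hab | ⟨h1, h2⟩) (hbc | ⟨g1, g2⟩)
    · exact Or.inl (P.iseqv.trans hab hbc)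
    · rcases h a b hab with rfl | ⟨_, h2⟩
      · exact Or.inr ⟨g1, g2⟩
      · exact absurd g1 h2
    · rcases h b c hbc with rfl | ⟨h1', _⟩
      · exact Or.inr ⟨h1, h2⟩
      · exact absurd h2 h1'
    · exact Or.inr ⟨h1, g2⟩

lemma glue_r {P : Setoid V} {A : Set V} (h : Compat P A) {a b : V} :
    (glue P A).r a b ↔ P.r a b ∨ (a ∈ A ∧ b ∈ A) := by
  rw [glue, dif_pos (glue_equiv h)]
  exact Iff.rfl

lemma glue_bot {A : Set V} : glue (⊥ : Setoid V) A = collapse A := by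
  have hc : Compat (⊥ : Setoid V) A := fun x y h => Or.inl h
  apply Setoid.ext; intro a b
  rw [show ((glue (⊥:Setoid V) A) a b) = ((glue (⊥:Setoid V) A).r a b) from rfl,
    glue_r hc]
  exact Iff.rfl


/-! ### Merge steps and gluing -/

open Trigraph

lemma mergeSetoid_r {P : Setoid V} {u v a b : V} :
    (mergeSetoid P u v).r a b ↔
      P.r a b ∨ (P.r a u ∧ P.r v b) ∨ (P.r a v ∧ P.r u b) := Iff.rfl

lemma mergeStep_glue {P P' : Setoid V} {S A : Set V}
    (hP : SubS P S) (hP' : SubS P' S) (hd : ∀ x, x ∈ S → x ∉ A)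
    (h : MergeStep P P') : MergeStep (glue P A) (glue P' A) := by
  obtain ⟨u, v, huv, rfl⟩ := h
  have hcP : Compat P A := compat_of_subS hP hd
  have hcP' : Compat (mergeSetoid P u v) A := compat_of_subS hP' hd
  have hne : u ≠ v := fun h' => huv (h' ▸ P.iseqv.refl u)
  have huvS : u ∈ S ∧ v ∈ S := by
    have : (mergeSetoid P u v).r u v :=
      Or.inr (Or.inl ⟨P.iseqv.refl u, P.iseqv.refl v⟩)
    rcases hP' u v this with h' | h'
    · exact absurd h' hne
    · exact h'
  have huA : u ∉ A := hd u huvS.1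
  have hvA : v ∉ A := hd v huvS.2
  refine ⟨u, v, ?_, ?_⟩
  · rw [glue_r hcP]
    rintro (h' | ⟨h1, _⟩)
    · exact huv h'
    · exact huA h1
  · apply Setoid.ext
    intro a b
    have e1 : ∀ c, (glue P A).r c u ↔ P.r c u := by
      intro c
      rw [glue_r hcP]
      constructor
      · rintro (h' | ⟨_, h2⟩)
        · exact h'
        · exact absurd h2 huA
      · exact Or.inl
    have e2 : ∀ c, (glue P A).r c v ↔ P.r c v := by
      intro c
      rw [glue_r hcP]
      constructor
      · rintro (h' | ⟨_, h2⟩)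
        · exact h'
        · exact absurd h2 hvA
      · exact Or.inl
    have e3 : ∀ c, (glue P A).r u c ↔ P.r u c := by
      intro c
      constructor
      · intro h'; exact (e1 c).1 ((glue P A).iseqv.symm h') |> P.iseqv.symm
      · intro h'; rw [glue_r hcP]; exact Or.inl h'
    have e4 : ∀ c, (glue P A).r v c ↔ P.r v c := by
      intro c
      constructor
      · intro h'; exact (e2 c).1 ((glue P A).iseqv.symm h') |> P.iseqv.symm
      · intro h'; rw [glue_r hcP]; exact Or.inl h'
    show (glue (mergeSetoid P u v) A).r a b ↔ (mergeSetoid (glue P A) u v).r a b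
    rw [glue_r hcP', mergeSetoid_r, mergeSetoid_r, glue_r hcP, e1, e2, e3, e4]
    tauto

lemma chain_glue {S A : Set V} (hd : ∀ x, x ∈ S → x ∉ A) :
    ∀ (l : List (Setoid V)), (∀ P ∈ l, SubS P S) → l.Chain' MergeStep →
      (l.map (fun P => glue P A)).Chain' MergeStep := by
  intro l
  induction l with
  | nil => intro _ _; exact List.isChain_nil
  | cons P t ih =>
    intro hmem hch
    cases t with
    | nil => exact List.isChain_singleton _
    | cons Q t' =>
      rw [List.Chain', List.isChain_cons_cons] at hch
      have := ih (fun R hR => hmem R (List.mem_cons_of_mem P hR)) hch.2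
      rw [List.map_cons, List.map_cons, List.Chain', List.isChain_cons_cons]
      refine ⟨?_, this⟩
      exact mergeStep_glue (hmem P List.mem_cons_self)
        (hmem Q (List.mem_cons_of_mem P List.mem_cons_self)) hd hch.1

lemma mem_dropLast_or_getLast {α : Type*} : ∀ (l : List α) (x z : α),
    x ∈ l → l.getLast? = some z → x ∈ l.dropLast ∨ x = z := by
  intro l
  induction l with
  | nil => intro x z hx _; exact absurd hx List.not_mem_nil
  | cons a t ih =>
    intro x z hx hz
    cases t with
    | nil =>
      simp only [List.getLast?_singleton, Option.some.injEq] at hz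
      simp only [List.mem_singleton] at hx
      exact Or.inr (hx.trans hz)
    | cons b t' =>
      rw [List.getLast?_cons_cons] at hz
      rcases List.mem_cons.1 hx with rfl | hx'
      · left
        rw [List.dropLast_cons₂]
        exact List.mem_cons_self
      · rcases ih x z hx' hz with h | h
        · left
          rw [List.dropLast_cons₂]
          exact List.mem_cons_of_mem _ h
        · exact Or.inr h

/-! ### Red adjacency at the level of representatives -/

def crossA (P : Setoid V) (x y : V) : Prop :=
  ∃ a b, P.r a x ∧ P.r b y ∧ G.Adj a b

def fullA (P : Setoid V) (x y : V) : Prop :=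
  ∀ a b, P.r a x → P.r b y → G.Adj a b

def RedR (P : Setoid V) (x y : V) : Prop :=
  ¬ P.r x y ∧ crossA G P x y ∧ ¬ fullA G P x y

def Deg2 (P : Setoid V) : Prop :=
  ∀ x : V, ∃ y z : V, ∀ w, RedR G P x w → P.r w y ∨ P.r w z

lemma redR_triv {P : Setoid V} {x w : V} (hx : Triv P x) (hw : Triv P w)
    (h : RedR G P x w) : False := by
  obtain ⟨hne, ⟨a, b, ha, hb, hab⟩, hnf⟩ := h
  apply hnf
  intro a' b' ha' hb'
  rw [hx a' ha', hw b' hb']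
  rw [hx a ha, hw b hb] at hab
  exact hab

lemma quot_red_adj (P : Setoid V) (x y : V) :
    ((Trigraph.ofGraph G).quot P).red.Adj (Quotient.mk P x) (Quotient.mk P y) ↔
      RedR G P x y := by
  show (Quotient.mk P x ≠ Quotient.mk P y ∧ _ ∧ _) ↔ _
  constructor
  · rintro ⟨hne, hnf, a, b, ha, hb, hab⟩
    refine ⟨fun h => hne (Quotient.sound h), ?_, ?_⟩
    · refine ⟨a, b, Quotient.eq.1 ha, Quotient.eq.1 hb, ?_⟩
      rcases hab with h | h
      · exact h
      · exact absurd h (by simp [Trigraph.ofGraph])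
    · intro hf
      exact hnf fun a b ha hb => hf a b (Quotient.eq.1 ha) (Quotient.eq.1 hb)
  · rintro ⟨hne, ⟨a, b, ha, hb, hab⟩, hnf⟩
    refine ⟨fun h => hne (Quotient.eq.1 h), ?_,
      a, b, Quotient.sound ha, Quotient.sound hb, Or.inl hab⟩
    intro hf
    exact hnf fun a b ha hb => hf a b (Quotient.sound ha) (Quotient.sound hb)

lemma deg2_redDegLE {P : Setoid V} (h : Deg2 G P) :
    ((Trigraph.ofGraph G).quot P).RedDegLE 2 := by
  intro X
  obtain ⟨x, rfl⟩ := Quotient.exists_rep X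
  obtain ⟨y, z, hyz⟩ := h x
  have hsub : ((Trigraph.ofGraph G).quot P).red.neighborSet (Quotient.mk P x) ⊆
      {Quotient.mk P y, Quotient.mk P z} := by
    intro Y hY
    obtain ⟨w, rfl⟩ := Quotient.exists_rep Y
    have : RedR G P x w := (quot_red_adj G P x w).1 hY
    rcases hyz w this with h' | h'
    · exact Or.inl (Quotient.sound h')
    · exact Or.inr (Quotient.sound h')
  calc (((Trigraph.ofGraph G).quot P).red.neighborSet (Quotient.mk P x)).ncard
      ≤ ({Quotient.mk P y, Quotient.mk P z} : Set (Quotient P)).ncard :=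
        Set.ncard_le_ncard hsub ((Set.finite_singleton _).insert _)
    _ ≤ ({Quotient.mk P z} : Set (Quotient P)).ncard + 1 := Set.ncard_insert_le _ _
    _ ≤ 2 := by rw [Set.ncard_singleton]

/-! ### Red degree bounds for the partitions appearing in the construction -/

/-- Red degree of a collapsed pendant set: every red neighbour is the class of `ρ`
or inside `B`. -/
lemma deg2_collapse {B : Set V} {ρ : V} (hB : B.Nonempty)
    (hbd : ∀ a b, a ∈ B → b ∉ B → G.Adj a b → b = ρ) : Deg2 G (collapse B) := by
  obtain ⟨β, hβ⟩ := hB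
  intro x
  by_cases hxB : x ∈ B
  · refine ⟨ρ, ρ, ?_⟩
    rintro w ⟨hne, ⟨a, b, ha, hb, hab⟩, hnf⟩
    have haB : a ∈ B := by
      rcases ha with rfl | ⟨h1, _⟩
      · exact hxB
      · exact h1
    by_cases hwB : w ∈ B
    · exact absurd (Or.inr ⟨hxB, hwB⟩) hne
    · have hbB : b ∉ B := by
        intro hbB
        rcases hb with rfl | ⟨_, h2⟩
        · exact hwB hbB
        · exact hwB h2
      have hbρ : b = ρ := hbd a b haB hbB hab
      have hwb : w = b := by
        rcases hb with rfl | ⟨h1, _⟩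
        · rfl
        · exact absurd h1 hbB
      exact Or.inl (Or.inl (hwb.trans hbρ))
  · refine ⟨β, β, ?_⟩
    rintro w ⟨hne, ⟨a, b, ha, hb, hab⟩, hnf⟩
    have hax : a = x := by
      rcases ha with rfl | ⟨_, h2⟩
      · rfl
      · exact absurd h2 hxB
    subst hax
    by_cases hbB : b ∈ B
    · have hwB : w ∈ B := by
        rcases hb with rfl | ⟨_, h2⟩
        · exact hbB
        · exact h2
      exact Or.inl (Or.inr ⟨hwB, hβ⟩)
    · exfalso
      have hwb : w = b := by
        rcases hb with rfl | ⟨h1, _⟩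
        · rfl
        · exact absurd h1 hbB
      refine redR_triv G (P := collapse B) (x := a) (w := w) ?_ ?_ ⟨hne, ⟨a, b, Setoid.refl' _ a, hb, hab⟩, hnf⟩
      · intro y hy
        rcases hy with rfl | ⟨_, h2⟩
        · rfl
        · exact absurd h2 hxB
      · intro y hy
        subst hwb
        rcases hy with rfl | ⟨_, h2⟩
        · rfl
        · exact absurd h2 hbB

/-- Red degree for glued partitions during the processing of a pendant subtree. -/
lemma deg2_glue {S' A : Set V} {r c cA : V}
    (hd : ∀ x, x ∈ S' → x ∉ A)
    (hcS' : c ∈ S') (hrS' : r ∉ S') (hrA : r ∉ A) (hcA : cA ∈ A)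
    (F2 : ∀ a b, a ∈ S' → b ∉ S' → G.Adj a b → a = c ∧ b = r)
    (F3 : ∀ a b, a ∈ A → b ∉ A → G.Adj a b → b = r)
    (P : Setoid V) (hP : SubS P S')
    (hcase : (Deg2 G P ∧ Triv P c) ∨ P = collapse S') :
    Deg2 G (glue P A) := by
  have hcompat : Compat P A := compat_of_subS hP hd
  have hg : ∀ {a b : V}, (glue P A).r a b ↔ P.r a b ∨ (a ∈ A ∧ b ∈ A) :=
    fun {a b} => glue_r hcompat
  -- class membership helpers
  have gx_in : ∀ {a x : V}, x ∈ S' → ((glue P A).r a x ↔ P.r a x) := by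
    intro a x hx
    rw [hg]
    constructor
    · rintro (h | ⟨_, h2⟩)
      · exact h
      · exact absurd h2 (hd x hx)
    · exact Or.inl
  have gS' : ∀ {a x : V}, x ∈ S' → (glue P A).r a x → a = x ∨ a ∈ S' := by
    intro a x hx h
    rcases hP a x ((gx_in hx).1 h) with h' | h'
    · exact Or.inl h'
    · exact Or.inr h'.1
  have gr : ∀ {a : V}, (glue P A).r a r → a = r := by
    intro a h
    rw [hg] at h
    rcases h with h | ⟨_, h2⟩
    · rcases hP a r h with h' | h'
      · exact h'
      · exact absurd h'.2 hrS'
    · exact absurd h2 hrA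
  have gA : ∀ {a x : V}, x ∈ A → (glue P A).r a x → a = x ∨ a ∈ A := by
    intro a x hx h
    rw [hg] at h
    rcases h with h | ⟨h1, _⟩
    · rcases hP a x h with h' | h'
      · exact Or.inl h'
      · exact absurd hx (hd x h'.2)
    · exact Or.inr h1
  have gOther : ∀ {a x : V}, x ∉ S' → x ∉ A → (glue P A).r a x → a = x := by
    intro a x hx1 hx2 h
    rw [hg] at h
    rcases h with h | ⟨_, h2⟩
    · rcases hP a x h with h' | h'
      · exact h'
      · exact absurd h'.2 hx1
    · exact absurd h2 hx2
  intro x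
  by_cases hxS' : x ∈ S'
  · rcases hcase with ⟨hDeg, htc⟩ | rfl
    · -- middle stage: class of `c` is trivial
      obtain ⟨y, z, hyz⟩ := hDeg x
      refine ⟨y, z, ?_⟩
      rintro w ⟨hne, ⟨a, b, ha, hb, hab⟩, hnf⟩
      by_cases hwS' : w ∈ S'
      · have : RedR G P x w := by
          refine ⟨fun h => hne (hg.2 (Or.inl h)),
            ⟨a, b, (gx_in hxS').1 ha, (gx_in hwS').1 hb, hab⟩, ?_⟩
          intro hf
          exact hnf fun a' b' ha' hb' => hf a' b' ((gx_in hxS').1 ha') ((gx_in hwS').1 hb')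
        rcases hyz w this with h | h
        · exact Or.inl (hg.2 (Or.inl h))
        · exact Or.inr (hg.2 (Or.inl h))
      · exfalso
        have haS' : a ∈ S' := by
          rcases gS' hxS' ha with rfl | h'
          · exact hxS'
          · exact h'
        have hbS' : b ∉ S' := by
          intro hbS'
          have hpb : P.r w b := (gx_in hbS').1 ((glue P A).iseqv.symm hb)
          rcases hP w b hpb with rfl | h'
          · exact hwS' hbS'
          · exact hwS' h'.1
        obtain ⟨hac, hbr⟩ := F2 a b haS' hbS' hab
        have hxc : x = c :=
          htc x ((gx_in hcS').1 ((glue P A).iseqv.symm (hac ▸ ha)))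
        have hwr : w = r := gr ((glue P A).iseqv.symm (hbr ▸ hb))
        apply hnf
        intro a' b' ha' hb'
        have ha'c : a' = c := htc a' ((gx_in hcS').1 (hxc ▸ ha'))
        have hb'r : b' = r := gr (hwr ▸ hb')
        rw [ha'c, hb'r]
        rw [hac, hbr] at hab
        exact hab
    · -- last stage: `P = collapse S'`
      refine ⟨r, r, ?_⟩
      rintro w ⟨hne, ⟨a, b, ha, hb, hab⟩, hnf⟩
      by_cases hwS' : w ∈ S'
      · exact absurd (hg.2 (Or.inl (Or.inr ⟨hxS', hwS'⟩))) hne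
      · have haS' : a ∈ S' := by
          rcases gS' hxS' ha with rfl | h'
          · exact hxS'
          · exact h'
        have hbS' : b ∉ S' := by
          intro hbS'
          have hpb : (collapse S').r w b := (gx_in hbS').1 ((glue _ A).iseqv.symm hb)
          rcases hpb with rfl | ⟨h1, _⟩
          · exact hwS' hbS'
          · exact hwS' h1
        obtain ⟨_, hbr⟩ := F2 a b haS' hbS' hab
        have hwr : w = r := gr ((glue (collapse S') A).iseqv.symm (hbr ▸ hb))
        exact Or.inl (hwr ▸ (glue (collapse S') A).iseqv.refl r)
  · by_cases hxA : x ∈ A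
    · refine ⟨r, r, ?_⟩
      rintro w ⟨hne, ⟨a, b, ha, hb, hab⟩, hnf⟩
      have haA : a ∈ A := by
        rcases gA hxA ha with rfl | h'
        · exact hxA
        · exact h'
      by_cases hbA : b ∈ A
      · have hwA : w ∈ A := by
          rcases gA hbA ((glue P A).iseqv.symm hb) with rfl | h'
          · exact hbA
          · exact h'
        exact absurd (hg.2 (Or.inr ⟨hxA, hwA⟩)) hne
      · have hbr : b = r := F3 a b haA hbA hab
        have hwr : w = r := gr ((glue P A).iseqv.symm (hbr ▸ hb))
        exact Or.inl (hwr ▸ (glue P A).iseqv.refl r)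
    · by_cases hxr : x = r
      · refine ⟨c, cA, ?_⟩
        rintro w ⟨hne, ⟨a, b, ha, hb, hab⟩, hnf⟩
        have har : a = r := gr (hxr ▸ ha)
        have hab' : G.Adj r b := har ▸ hab
        by_cases hbS' : b ∈ S'
        · have hbc : b = c := (F2 b r hbS' hrS' hab'.symm).1
          have hPwc : P.r w c := (gx_in hcS').1 ((glue P A).iseqv.symm (hbc ▸ hb))
          exact Or.inl (hg.2 (Or.inl hPwc))
        · by_cases hbA : b ∈ A
          · rcases gA hbA ((glue P A).iseqv.symm hb) with rfl | hwA
            · exact Or.inr (hg.2 (Or.inr ⟨hbA, hcA⟩))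
            · exact Or.inr (hg.2 (Or.inr ⟨hwA, hcA⟩))
          · exfalso
            by_cases hbr : b = r
            · exact G.irrefl (hbr ▸ hab')
            · have hwb : w = b := gOther hbS' hbA ((glue P A).iseqv.symm hb)
              refine redR_triv G (P := glue P A) (x := x) (w := w)
                (fun y hy => (gr (hxr ▸ hy)).trans hxr.symm)
                (fun y hy => (gOther hbS' hbA (hwb ▸ hy)).trans hwb.symm)
                ⟨hne, ⟨a, b, ha, hb, hab⟩, hnf⟩
      · -- x is in a trivial class anywhere else: no red neighbours
        refine ⟨x, x, ?_⟩
        rintro w ⟨hne, ⟨a, b, ha, hb, hab⟩, hnf⟩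
        exfalso
        have hax : a = x := gOther hxS' hxA ha
        have hab' : G.Adj x b := hax ▸ hab
        by_cases hbS' : b ∈ S'
        · exact hxr (F2 b x hbS' hxS' hab'.symm).2
        · by_cases hbA : b ∈ A
          · exact hxr (F3 b x hbA hxA hab'.symm)
          · by_cases hbr : b = r
            · have hwr : w = r := gr ((glue P A).iseqv.symm (hbr ▸ hb))
              refine redR_triv G (P := glue P A) (x := x) (w := w)
                (fun y hy => gOther hxS' hxA hy)
                (fun y hy => (gr (hwr ▸ hy)).trans hwr.symm)
                ⟨hne, ⟨a, b, ha, hb, hab⟩, hnf⟩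
            · have hwb : w = b := gOther hbS' hbA ((glue P A).iseqv.symm hb)
              refine redR_triv G (P := glue P A) (x := x) (w := w)
                (fun y hy => gOther hxS' hxA hy)
                (fun y hy => (gOther hbS' hbA (hwb ▸ hy)).trans hwb.symm)
                ⟨hne, ⟨a, b, ha, hb, hab⟩, hnf⟩

/-! ### Components of `S` minus the root -/

def comp (S : Set V) (r c : V) : Set V := {x | ReachIn G (S \ {r}) c x}

lemma comp_self (S : Set V) (r c : V) : c ∈ comp G S r c :=
  Relation.ReflTransGen.refl

lemma comp_subset {S : Set V} {r c : V} (hrc : G.Adj r c) (hcS : c ∈ S) :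
    comp G S r c ⊆ S \ {r} := by
  intro x hx
  rcases reachIn_mem G hx with rfl | ⟨_, h2⟩
  · exact ⟨hcS, fun h => G.irrefl (h ▸ hrc)⟩
  · exact h2

lemma comp_conn {S : Set V} {r c : V} :
    ∀ a ∈ comp G S r c, ReachIn G (comp G S r c) c a := by
  intro a ha
  exact reach_into_comp G ha

lemma comp_boundary (hA : G.IsAcyclic) {S : Set V} {r r' c : V}
    (hrc : G.Adj r c) (hcS : c ∈ S)
    (hout : ∀ a b, a ∈ S → b ∉ S → G.Adj a b → a = r ∧ b = r') :
    ∀ a b, a ∈ comp G S r c → b ∉ comp G S r c → G.Adj a b → a = c ∧ b = r := by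
  intro a b ha hb hab
  have haSr : a ∈ S \ {r} := comp_subset G hrc hcS ha
  have hbSr : b ∉ S \ {r} := fun hbSr => hb (ha.tail ⟨haSr, hbSr, hab⟩)
  have hbr : b = r := by
    by_cases hbS : b ∈ S
    · by_contra hbr
      exact hbr (by_contra fun h => hbr (Classical.byContradiction
        fun _ => hbr (False.elim (hbSr ⟨hbS, h⟩))))
    · exact absurd (hout a b haSr.1 hbS hab).1 haSr.2
  subst hbr
  exact ⟨(attach_unique G hA hrc hab.symm ha).symm, rfl⟩

lemma comp_disjoint (hA : G.IsAcyclic) {S : Set V} {r c c' : V}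
    (hrc : G.Adj r c) (hrc' : G.Adj r c') (hne : c ≠ c') :
    ∀ x, x ∈ comp G S r c → x ∈ comp G S r c' → False := by
  intro x hx hx'
  exact hne (attach_unique G hA hrc hrc' (hx.trans (reachIn_symm G hx')))

lemma subS_glue {P : Setoid V} {A T : Set V} (hc : Compat P A)
    (h1 : SubS P T) (h2 : A ⊆ T) : SubS (glue P A) T := by
  intro x y hxy
  rw [glue_r hc] at hxy
  rcases hxy with h | ⟨ha, hb⟩
  · exact h1 x y h
  · exact Or.inr ⟨h2 ha, h2 hb⟩

/-! ### The main construction -/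

open Trigraph in
lemma lemA [Fintype V] (hA : G.IsAcyclic) :
    ∀ (n : ℕ) (S : Set V) (r r' : V), S.ncard ≤ n → r ∈ S →
    (∀ a ∈ S, ReachIn G S r a) →
    (∀ a b, a ∈ S → b ∉ S → G.Adj a b → a = r ∧ b = r') →
    ∃ L : List (Setoid V),
      L.head? = some ⊥ ∧
      L.Chain' MergeStep ∧
      L.getLast? = some (collapse S) ∧
      (∀ P ∈ L, SubS P S) ∧
      (∀ P ∈ L.dropLast, Triv P r) ∧
      (∀ P ∈ L, Deg2 G P) := by
  intro n
  induction n using Nat.strong_induction_on with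
  | _ n ih =>
  intro S r r' hcard hrS hconn hout
  by_cases hSr : S = {r}
  · -- single vertex
    subst hSr
    refine ⟨[⊥], rfl, List.isChain_singleton _, ?_, ?_, ?_, ?_⟩
    · rw [collapse_singleton]
      rfl
    · intro P hP
      rw [List.mem_singleton] at hP
      subst hP
      exact subS_bot _
    · intro P hP
      simp at hP
    · intro P hP
      rw [List.mem_singleton] at hP
      subst hP
      exact fun x => ⟨x, x, fun w hw =>
        absurd hw (fun hw => redR_triv G (fun y hy => hy) (fun y hy => hy) hw)⟩
  · -- S has at least two elements
    have hSfin : S.Finite := Set.toFinite S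
    have hSrlt : (S \ {r}).ncard < S.ncard := Set.ncard_diff_singleton_lt_of_mem hrS
    -- the inner induction on sets of children of r
    have inner : ∀ C : Finset V, C.Nonempty → (∀ c ∈ C, G.Adj r c ∧ c ∈ S) →
        ∃ L : List (Setoid V),
          L.head? = some ⊥ ∧ L.Chain' MergeStep ∧
          L.getLast? = some (collapse (⋃ c ∈ C, comp G S r c)) ∧
          (∀ P ∈ L, SubS P (S \ {r})) ∧ (∀ P ∈ L, Deg2 G P) := by
      intro C
      induction C using Finset.cons_induction with
      | empty => intro h; exact absurd h (by simp)
      | cons c C hcC ihC =>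
        intro _ hmem
        obtain ⟨hrc, hcS⟩ := hmem c (Finset.mem_cons_self c C)
        -- recursive call on the component of c
        have hcard' : (comp G S r c).ncard < n :=
          lt_of_lt_of_le (lt_of_le_of_lt
            (Set.ncard_le_ncard (comp_subset G hrc hcS)) hSrlt) hcard
        obtain ⟨M, Mh, Mc, Ml, MS, Md, MD⟩ :=
          ih (comp G S r c).ncard hcard' (comp G S r c) c r le_rfl
            (comp_self G S r c) (comp_conn G)
            (comp_boundary G hA hrc hcS hout)
        rcases C.eq_empty_or_nonempty with rfl | hCne
        · -- single child: the recursive list works as is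
          have hU : (⋃ c' ∈ Finset.cons c ∅ hcC, comp G S r c') = comp G S r c := by
            simp
          refine ⟨M, Mh, Mc, by rw [hU]; exact Ml, ?_, MD⟩
          intro P hP
          exact subS_mono (MS P hP) (comp_subset G hrc hcS)
        · -- at least two children
          obtain ⟨LC, LCh, LCc, LCl, LCS, LCD⟩ := ihC hCne
            (fun c' h' => hmem c' (Finset.mem_cons_of_mem h'))
          obtain ⟨c₀, hc₀C⟩ := hCne
          have hc₀ := hmem c₀ (Finset.mem_cons_of_mem hc₀C)
          -- notation
          set A : Set V := ⋃ c' ∈ C, comp G S r c' with hAdef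
          set S' : Set V := comp G S r c with hS'def
          have hmemA : ∀ x, x ∈ A ↔ ∃ c' ∈ C, x ∈ comp G S r c' := by
            intro x
            simp [hAdef]
          have hASr : A ⊆ S \ {r} := by
            intro x hx
            obtain ⟨c', hc'C, hx⟩ := (hmemA x).1 hx
            exact comp_subset G (hmem c' (Finset.mem_cons_of_mem hc'C)).1
              (hmem c' (Finset.mem_cons_of_mem hc'C)).2 hx
          have hS'Sr : S' ⊆ S \ {r} := comp_subset G hrc hcS
          have hd : ∀ x, x ∈ S' → x ∉ A := by
            intro x hx hxA
            obtain ⟨c', hc'C, hx'⟩ := (hmemA x).1 hxA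
            have hnec : c ≠ c' := fun h => hcC (h ▸ hc'C)
            exact comp_disjoint G hA hrc (hmem c' (Finset.mem_cons_of_mem hc'C)).1
              hnec x hx hx'
          have hrS' : r ∉ S' := fun h => (hS'Sr h).2 rfl
          have hrA : r ∉ A := fun h => (hASr h).2 rfl
          have hcS' : c ∈ S' := comp_self G S r c
          have hcA : c₀ ∈ A := (hmemA c₀).2 ⟨c₀, hc₀C, comp_self G S r c₀⟩
          have F2 : ∀ a b, a ∈ S' → b ∉ S' → G.Adj a b → a = c ∧ b = r :=
            comp_boundary G hA hrc hcS hout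
          have F3 : ∀ a b, a ∈ A → b ∉ A → G.Adj a b → b = r := by
            intro a b ha hb hab
            obtain ⟨c', hc'C, ha'⟩ := (hmemA a).1 ha
            have hb' : b ∉ comp G S r c' := fun h => hb ((hmemA b).2 ⟨c', hc'C, h⟩)
            exact (comp_boundary G hA (hmem c' (Finset.mem_cons_of_mem hc'C)).1
              (hmem c' (Finset.mem_cons_of_mem hc'C)).2 hout a b ha' hb' hab).2
          -- the glued middle part
          set Mg : List (Setoid V) := M.map (fun P => glue P A) with hMgdef
          have MgChain : Mg.Chain' MergeStep := chain_glue hd M MS Mc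
          have Mghead : Mg.head? = some (collapse A) := by
            rw [hMgdef, List.head?_map, Mh]
            simp [glue_bot]
          have Mglast : Mg.getLast? = some (glue (collapse S') A) := by
            rw [hMgdef, List.getLast?_map, Ml]
            rfl
          -- target of this stage
          have hU : (⋃ c' ∈ Finset.cons c C hcC, comp G S r c') = A ∪ S' := by
            ext x
            simp only [Finset.mem_cons, Set.mem_iUnion, Set.mem_union, hAdef, hS'def]
            constructor
            · rintro ⟨c', (rfl | h), hx⟩
              · exact Or.inr hx
              · exact Or.inl (by simpa using ⟨c', h, hx⟩)
            · rintro (h | h)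
              · obtain ⟨c', h, hx⟩ := by simpa using h
                exact ⟨c', Or.inr h, hx⟩
              · exact ⟨c, Or.inl rfl, h⟩
          set Qnew : Setoid V := collapse (A ∪ S') with hQdef
          -- the final merge step
          have hfinal : MergeStep (glue (collapse S') A) Qnew := by
            have hcom : Compat (collapse S') A :=
              compat_of_subS (subS_collapse S') hd
            have hcnA : c ∉ A := hd c hcS'
            refine ⟨c₀, c, ?_, ?_⟩
            · rw [glue_r hcom]
              rintro ((rfl | ⟨h1, _⟩) | ⟨_, h2⟩)
              · exact hcnA hcA
              · exact hd c₀ h1 hcA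
              · exact hcnA h2
            · apply Setoid.ext
              intro a b
              show (collapse (A ∪ S')).r a b ↔ (mergeSetoid (glue (collapse S') A) c₀ c).r a b
              rw [mergeSetoid_r]
              have hR : ∀ {u v : V}, (glue (collapse S') A).r u v ↔
                  (u = v ∨ (u ∈ S' ∧ v ∈ S')) ∨ (u ∈ A ∧ v ∈ A) := fun {u v} => glue_r hcom
              rw [collapse_r]
              constructor
              · rintro (rfl | ⟨(ha | ha), (hb | hb)⟩)
                · exact Or.inl (hR.2 (Or.inl (Or.inl rfl)))
                · exact Or.inl (hR.2 (Or.inr ⟨ha, hb⟩))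
                · exact Or.inr (Or.inl ⟨hR.2 (Or.inr ⟨ha, hcA⟩), hR.2 (Or.inl (Or.inr ⟨hcS', hb⟩))⟩)
                · exact Or.inr (Or.inr ⟨hR.2 (Or.inl (Or.inr ⟨ha, hcS'⟩)), hR.2 (Or.inr ⟨hcA, hb⟩)⟩)
                · exact Or.inl (hR.2 (Or.inl (Or.inr ⟨ha, hb⟩)))
              · rintro (h | ⟨h1, h2⟩ | ⟨h1, h2⟩)
                · rcases hR.1 h with (rfl | ⟨ha, hb⟩) | ⟨ha, hb⟩
                  · exact Or.inl rfl
                  · exact Or.inr ⟨Or.inr ha, Or.inr hb⟩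
                  · exact Or.inr ⟨Or.inl ha, Or.inl hb⟩
                · -- h1 : r a c₀, h2 : r c b
                  have hax : a ∈ A := by
                    rcases hR.1 h1 with (rfl | ⟨_, h'⟩) | ⟨h', _⟩
                    · exact hcA
                    · exact absurd hcA (hd c₀ h')
                    · exact h'
                  have hbx : b ∈ S' := by
                    rcases hR.1 h2 with (rfl | ⟨_, h'⟩) | ⟨h', _⟩
                    · exact hcS'
                    · exact h'
                    · exact absurd h' (hd c hcS')
                  exact Or.inr ⟨Or.inl hax, Or.inr hbx⟩
                · have hax : a ∈ S' := by
                    rcases hR.1 h1 with (rfl | ⟨h', _⟩) | ⟨_, h'⟩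
                    · exact hcS'
                    · exact h'
                    · exact absurd h' (hd c hcS')
                  have hbx : b ∈ A := by
                    rcases hR.1 h2 with (rfl | ⟨h', _⟩) | ⟨_, h'⟩
                    · exact hcA
                    · exact absurd hcA (hd c₀ h')
                    · exact h'
                  exact Or.inr ⟨Or.inr hax, Or.inl hbx⟩
          -- decompose Mg
          obtain ⟨Mt, hMt⟩ : ∃ Mt, Mg = collapse A :: Mt := by
            cases hMg : Mg with
            | nil => rw [hMg] at Mghead; simp at Mghead
            | cons P0 Mt =>
              rw [hMg] at Mghead
              simp only [List.head?_cons, Option.some.injEq] at Mghead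
              exact ⟨Mt, by rw [Mghead]⟩
          -- last element of LC ++ Mt
          have hlast2 : (LC ++ Mt).getLast? = some (glue (collapse S') A) := by
            cases hMtnil : Mt with
            | nil =>
              have hMg1 : Mg = [collapse A] := by rw [hMt, hMtnil]
              rw [hMg1] at Mglast
              simp only [List.getLast?_singleton, Option.some.injEq] at Mglast
              rw [List.append_nil, LCl, Mglast]
            | cons Q Mt' =>
              rw [List.getLast?_append_of_ne_nil _ (by simp)]
              rw [hMt, hMtnil, List.getLast?_cons_cons] at Mglast
              exact Mglast
          refine ⟨(LC ++ Mt) ++ [Qnew], ?_, ?_, ?_, ?_, ?_⟩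
          · -- head
            cases hLC : LC with
            | nil => rw [hLC] at LCh; simp at LCh
            | cons P0 LC' =>
              rw [hLC] at LCh
              simp only [List.head?_cons, Option.some.injEq] at LCh
              simp [LCh]
          · -- chain
            rw [List.Chain', List.isChain_append]
            refine ⟨?_, List.isChain_singleton _, ?_⟩
            · rw [List.isChain_append]
              refine ⟨LCc, (hMt ▸ MgChain).tail, ?_⟩
              intro x hx y hy
              rw [LCl, Option.mem_def, Option.some.injEq] at hx
              subst hx
              have := (List.isChain_cons.1 (hMt ▸ MgChain)).1
              exact this y hy
            · intro x hx y hy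
              rw [hlast2, Option.mem_def, Option.some.injEq] at hx
              simp only [List.head?_cons, Option.mem_def, Option.some.injEq] at hy
              subst hx
              subst hy
              exact hfinal
          · -- getLast
            rw [List.getLast?_concat, hQdef, hU]
          · -- SubS
            intro P hP
            rw [List.mem_append] at hP
            rcases hP with hP | hP
            · rw [List.mem_append] at hP
              rcases hP with hP | hP
              · exact LCS P hP
              · have hPMg : P ∈ Mg := by rw [hMt]; exact List.mem_cons_of_mem _ hP
                obtain ⟨P₀, hP₀M, rfl⟩ := List.mem_map.1 (hMgdef ▸ hPMg)
                exact subS_glue (compat_of_subS (MS P₀ hP₀M) hd)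
                  (subS_mono (MS P₀ hP₀M) hS'Sr) hASr
            · rw [List.mem_singleton] at hP
              subst hP
              rw [hQdef]
              intro x y hxy
              rcases hxy with rfl | ⟨h1, h2⟩
              · exact Or.inl rfl
              · refine Or.inr ⟨?_, ?_⟩
                · rcases h1 with h | h
                  · exact hASr h
                  · exact hS'Sr h
                · rcases h2 with h | h
                  · exact hASr h
                  · exact hS'Sr h
          · -- Deg2
            intro P hP
            rw [List.mem_append] at hP
            rcases hP with hP | hP
            · rw [List.mem_append] at hP
              rcases hP with hP | hP
              · exact LCD P hP
              · have hPMg : P ∈ Mg := by rw [hMt]; exact List.mem_cons_of_mem _ hP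
                obtain ⟨P₀, hP₀M, rfl⟩ := List.mem_map.1 (hMgdef ▸ hPMg)
                refine deg2_glue G hd hcS' hrS' hrA hcA F2 F3 P₀ (MS P₀ hP₀M) ?_
                rcases mem_dropLast_or_getLast M P₀ (collapse S') hP₀M Ml with h | h
                · exact Or.inl ⟨MD P₀ hP₀M, Md P₀ h⟩
                · exact Or.inr h
            · rw [List.mem_singleton] at hP
              subst hP
              rw [hQdef]
              refine deg2_collapse G (ρ := r) ⟨c, Or.inr hcS'⟩ ?_
              intro a b ha hb hab
              rcases ha with ha | ha
              · exact F3 a b ha (fun h => hb (Or.inl h)) hab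
              · exact (F2 a b ha (fun h => hb (Or.inr h)) hab).2
    -- outer assembly
    have hex : ∃ x, x ∈ S ∧ x ≠ r := by
      by_contra h
      push_neg at h
      exact hSr (Set.eq_singleton_iff_unique_mem.2 ⟨hrS, fun x hx => by
        by_contra hxr
        exact hxr (h x hx)⟩)
    obtain ⟨x₀, hx₀S, hx₀r⟩ := hex
    obtain ⟨c₁, hc₁adj, hc₁S, _⟩ := reach_decomp G (hconn x₀ hx₀S) hx₀r
    set Cfull : Finset V := Set.Finite.toFinset
      (Set.toFinite {c | G.Adj r c ∧ c ∈ S}) with hCfulldef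
    have hCfullmem : ∀ c, c ∈ Cfull ↔ (G.Adj r c ∧ c ∈ S) := by
      intro c
      rw [hCfulldef, Set.Finite.mem_toFinset]
      rfl
    obtain ⟨LI, LIh, LIc, LIl, LIS, LID⟩ := inner Cfull ⟨c₁, (hCfullmem c₁).2 ⟨hc₁adj, hc₁S⟩⟩
      (fun c h => (hCfullmem c).1 h)
    have hAS : (⋃ c ∈ Cfull, comp G S r c) = S \ {r} := by
      apply Set.Subset.antisymm
      · intro x hx
        simp only [Set.mem_iUnion] at hx
        obtain ⟨c, hc, hx⟩ := hx
        exact comp_subset G ((hCfullmem c).1 hc).1 ((hCfullmem c).1 hc).2 hx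
      · intro x hx
        obtain ⟨c, hcadj, hcS, hreach⟩ := reach_decomp G (hconn x hx.1) hx.2
        simp only [Set.mem_iUnion]
        exact ⟨c, (hCfullmem c).2 ⟨hcadj, hcS⟩, hreach⟩
    rw [hAS] at LIl
    have hfinal : MergeStep (collapse (S \ {r})) (collapse S) := by
      refine ⟨x₀, r, ?_, ?_⟩
      · rintro (rfl | ⟨_, h2⟩)
        · exact hx₀r rfl
        · exact h2.2 rfl
      · apply Setoid.ext
        intro a b
        show (collapse S).r a b ↔ (mergeSetoid (collapse (S \ {r})) x₀ r).r a b
        rw [mergeSetoid_r, collapse_r]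
        have hx₀Sr : x₀ ∈ S \ {r} := ⟨hx₀S, hx₀r⟩
        constructor
        · rintro (rfl | ⟨h1, h2⟩)
          · exact Or.inl (Or.inl rfl)
          · by_cases har : a = r
            · by_cases hbr : b = r
              · exact Or.inl (Or.inl (har.trans hbr.symm))
              · exact Or.inr (Or.inr ⟨Or.inl har, Or.inr ⟨hx₀Sr, ⟨h2, hbr⟩⟩⟩)
            · by_cases hbr : b = r
              · exact Or.inr (Or.inl ⟨Or.inr ⟨⟨h1, har⟩, hx₀Sr⟩, Or.inl hbr.symm⟩)
              · exact Or.inl (Or.inr ⟨⟨h1, har⟩, ⟨h2, hbr⟩⟩)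
        · rintro ((rfl | ⟨h1, h2⟩) | ⟨h1, h2⟩ | ⟨h1, h2⟩)
          · exact Or.inl rfl
          · exact Or.inr ⟨h1.1, h2.1⟩
          · -- h1 : a related to x₀, h2 : r related to b
            have hb : b = r := by
              rcases h2 with h | ⟨h', _⟩
              · exact h.symm
              · exact absurd rfl h'.2
            have ha : a ∈ S := by
              rcases h1 with rfl | ⟨h', _⟩
              · exact hx₀S
              · exact h'.1
            exact Or.inr ⟨ha, hb ▸ hrS⟩
          · have ha : a = r := by
              rcases h1 with h | ⟨_, h'⟩
              · exact h
              · exact absurd rfl h'.2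
            have hb : b ∈ S := by
              rcases h2 with rfl | ⟨_, h'⟩
              · exact hx₀S
              · exact h'.1
            exact Or.inr ⟨ha ▸ hrS, hb⟩
    refine ⟨LI ++ [collapse S], ?_, ?_, ?_, ?_, ?_, ?_⟩
    · cases hLI : LI with
      | nil => rw [hLI] at LIh; simp at LIh
      | cons P0 LI' =>
        rw [hLI] at LIh
        simp only [List.head?_cons, Option.some.injEq] at LIh
        simp [LIh]
    · rw [List.Chain', List.isChain_append]
      refine ⟨LIc, List.isChain_singleton _, ?_⟩
      intro x hx y hy
      rw [LIl, Option.mem_def, Option.some.injEq] at hx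
      simp only [List.head?_cons, Option.mem_def, Option.some.injEq] at hy
      subst hx
      subst hy
      exact hfinal
    · rw [List.getLast?_concat]
    · intro P hP
      rw [List.mem_append] at hP
      rcases hP with hP | hP
      · exact subS_mono (LIS P hP) Set.diff_subset
      · rw [List.mem_singleton] at hP
        subst hP
        exact subS_collapse S
    · intro P hP
      rw [List.dropLast_concat] at hP
      exact triv_of_subS (LIS P hP) (fun h => h.2 rfl)
    · intro P hP
      rw [List.mem_append] at hP
      rcases hP with hP | hP
      · exact LID P hP
      · rw [List.mem_singleton] at hP
        subst hP
        refine deg2_collapse G (ρ := r') ⟨r, hrS⟩ ?_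
        intro a b ha hb hab
        exact (hout a b ha hb hab).2

end TwwTree
theorem tree_tww_le_two {V : Type} [Fintype V] (G : SimpleGraph V) (hT : G.IsTree) :
    (Trigraph.ofGraph G).tww ≤ 2 := by
  classical
  have hconn := hT.isConnected
  have hA : G.IsAcyclic := hT.IsAcyclic
  obtain ⟨r⟩ : Nonempty V := hconn.nonempty
  have hre : ∀ a ∈ (Set.univ : Set V), TwwTree.ReachIn G Set.univ r a := by
    intro a _
    have h := (SimpleGraph.reachable_iff_reflTransGen r a).1 (hconn.preconnected r a)
    exact Relation.ReflTransGen.mono (r := G.Adj)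
      (p := fun x y => x ∈ Set.univ ∧ y ∈ Set.univ ∧ G.Adj x y)
      (fun x y h' => ⟨trivial, trivial, h'⟩) _ _ h
  obtain ⟨L, Lh, Lc, Ll, _, _, LD⟩ :=
    TwwTree.lemA G hA (Set.univ : Set V).ncard Set.univ r r le_rfl trivial hre
      (fun a b _ hb _ => absurd trivial hb)
  apply Nat.sInf_le
  refine ⟨L, ⟨⟨Lh, Lc⟩, ?_⟩, ?_⟩
  · intro P hP
    exact TwwTree.deg2_redDegLE G (LD P hP)
  · rw [Ll, TwwTree.collapse_univ]
end

section
/- Let G be a trigraph containing a fence gadget F (with bipartition (A, B)) attached to a set S and satisfying the attachment rule in G. Consider a partial contraction sequence from G and its first contraction that involves a pair of vertices of V(F) (so before this contraction every vertex of V(F) lies in its own part, no part containing two vertices of V(F)). If the two involved vertices of V(F) both lie in A or both lie in B, then the vertex created by this contraction has red degree at least 5. -/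
open Trigraph

/-- The 12 vertices of a fence gadget with sides `a` (for `A = {a_1, …, a_6}`)
and `b` (for `B = {b_1, …, b_6}`), indexed by `Fin 6` (so `a 0` is `a_1`, …). -/
def fenceSet {V : Type} (a b : Fin 6 → V) : Set V := Set.range a ∪ Set.range b

/-- The fence gadget with sides `a`, `b` is attached to the set `S` in the trigraph
`G` and satisfies the attachment rule there, with associated set `X`.
Its black edges are the two 6-cycles on `A` and on `B` together with the edge
`b_1 a_6`; its red edges are `a_i b_i` (`i ∈ [6]`) and `a_i b_{i+1}` (`i ∈ [5]`);
the 12 fence vertices form a connected component of the red graph of `G`; every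
vertex of `A` has (black) neighborhood `X ∪ S` outside the fence, every vertex of
`B` has (black) neighborhood `X` outside the fence, and every vertex of `X` is
(black-)adjacent to all of `S`. -/
structure FenceAttached {V : Type} (G : Trigraph V) (a b : Fin 6 → V)
    (S X : Set V) : Prop where
  a_inj : Function.Injective a
  b_inj : Function.Injective b
  ab_ne : ∀ i j : Fin 6, a i ≠ b j
  S_nonempty : S.Nonempty
  S_disj : ∀ z ∈ S, z ∉ fenceSet a b
  X_disj : ∀ z ∈ X, z ∉ fenceSet a b ∪ S
  black_aa : ∀ i j : Fin 6, G.black.Adj (a i) (a j) ↔ (j = i + 1 ∨ i = j + 1)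
  black_bb : ∀ i j : Fin 6, G.black.Adj (b i) (b j) ↔ (j = i + 1 ∨ i = j + 1)
  black_ab : ∀ i j : Fin 6, G.black.Adj (a i) (b j) ↔ (i = 5 ∧ j = 0)
  red_aa : ∀ i j : Fin 6, ¬ G.red.Adj (a i) (a j)
  red_bb : ∀ i j : Fin 6, ¬ G.red.Adj (b i) (b j)
  red_ab : ∀ i j : Fin 6, G.red.Adj (a i) (b j) ↔ (j = i ∨ (j : ℕ) = (i : ℕ) + 1)
  red_closed : ∀ x ∈ fenceSet a b, ∀ y : V, G.red.Adj x y → y ∈ fenceSet a b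
  black_a_out : ∀ (i : Fin 6) (z : V), z ∉ fenceSet a b →
      (G.black.Adj (a i) z ↔ z ∈ X ∪ S)
  black_b_out : ∀ (i : Fin 6) (z : V), z ∉ fenceSet a b →
      (G.black.Adj (b i) z ↔ z ∈ X)
  X_black_S : ∀ x ∈ X, ∀ z ∈ S, G.black.Adj x z

/-! ### Auxiliary combinatorial model of the fence -/

abbrev FIdx := Sum (Fin 6) (Fin 6)

def fblack : FIdx → FIdx → Bool
  | .inl i, .inl j => decide (j = i + 1 ∨ i = j + 1)
  | .inl i, .inr j => decide (i = 5 ∧ j = 0)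
  | .inr i, .inl j => decide (j = 5 ∧ i = 0)
  | .inr i, .inr j => decide (j = i + 1 ∨ i = j + 1)

def fred : FIdx → FIdx → Bool
  | .inl i, .inr j => decide (j = i ∨ (j : ℕ) = (i : ℕ) + 1)
  | .inr i, .inl j => decide (i = j ∨ (i : ℕ) = (j : ℕ) + 1)
  | _, _ => false

def ftot (k u : FIdx) : Bool := fblack k u || fred k u

def fgood (u v k : FIdx) : Bool :=
  (!decide (k = u)) && (!decide (k = v)) && (ftot k u || ftot k v) &&
    !(fblack k u && fblack k v)

lemma fgood_card_A : ∀ i j : Fin 6, i ≠ j →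
    5 ≤ (Finset.univ.filter (fun k : FIdx => fgood (.inl i) (.inl j) k = true)).card := by
  decide

lemma fgood_card_B : ∀ i j : Fin 6, i ≠ j →
    5 ≤ (Finset.univ.filter (fun k : FIdx => fgood (.inr i) (.inr j) k = true)).card := by
  decide

theorem fence_same_side_contraction_red_degree_ge_five {V : Type} [Fintype V]
    (G : Trigraph V) (a b : Fin 6 → V) (S X : Set V)
    (hF : FenceAttached G a b S X)
    (L : List (Setoid V)) (P : Setoid V)
    (hL : Trigraph.IsPartialContractionSeq L) (hP : L.getLast? = some P)
    -- before this contraction, no part contains two vertices of `V(F)`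
    (hsep : ∀ x ∈ fenceSet a b, ∀ y ∈ fenceSet a b, P.r x y → x = y)
    (x y : V) (hne : ¬ P.r x y)
    -- the contraction involves the pair `x, y`, both in `A` or both in `B`
    (hxy : (∃ i j : Fin 6, i ≠ j ∧ x = a i ∧ y = a j) ∨
           (∃ i j : Fin 6, i ≠ j ∧ x = b i ∧ y = b j)) :
    5 ≤ (((G.quot (Trigraph.mergeSetoid P x y)).red.neighborSet
        (Quotient.mk (Trigraph.mergeSetoid P x y) x)).ncard) := by
  classical
  -- Reduce both cases of `hxy` to a statement about fence indices.
  obtain ⟨u, v, huv, hx, hy, hcard⟩ :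
      ∃ u v : FIdx, u ≠ v ∧ x = Sum.elim a b u ∧ y = Sum.elim a b v ∧
        5 ≤ (Finset.univ.filter (fun k : FIdx => fgood u v k = true)).card := by
    rcases hxy with ⟨i, j, hij, hx, hy⟩ | ⟨i, j, hij, hx, hy⟩
    · exact ⟨.inl i, .inl j, fun h => hij (Sum.inl.inj h), hx, hy, fgood_card_A i j hij⟩
    · exact ⟨.inr i, .inr j, fun h => hij (Sum.inr.inj h), hx, hy, fgood_card_B i j hij⟩
  subst hx hy
  set f : FIdx → V := Sum.elim a b with hf
  have hmem : ∀ k : FIdx, f k ∈ fenceSet a b := by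
    rintro (i | i)
    · exact Or.inl ⟨i, rfl⟩
    · exact Or.inr ⟨i, rfl⟩
  have hinj : Function.Injective f := by
    rintro (i | i) (j | j) h
    · exact congrArg Sum.inl (hF.a_inj h)
    · exact absurd h (hF.ab_ne i j)
    · exact absurd h.symm (hF.ab_ne j i)
    · exact congrArg Sum.inr (hF.b_inj h)
  have hsep' : ∀ k k' : FIdx, P.r (f k) (f k') → k = k' :=
    fun k k' h => hinj (hsep _ (hmem k) _ (hmem k') h)
  -- correspondence between `G` and the combinatorial model, on fence vertices
  have hblack : ∀ k u' : FIdx, G.black.Adj (f k) (f u') ↔ fblack k u' = true := by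
    rintro (i | i) (j | j)
    · simpa [f, fblack] using hF.black_aa i j
    · simpa [f, fblack] using hF.black_ab i j
    · simpa [f, fblack, G.black.adj_comm] using hF.black_ab j i
    · simpa [f, fblack] using hF.black_bb i j
  have hred : ∀ k u' : FIdx, G.red.Adj (f k) (f u') ↔ fred k u' = true := by
    rintro (i | i) (j | j)
    · simpa [f, fred] using hF.red_aa i j
    · simpa [f, fred] using hF.red_ab i j
    · simpa [f, fred, G.red.adj_comm] using hF.red_ab j i
    · simpa [f, fred] using hF.red_bb i j
  have htot : ∀ k u' : FIdx, G.TotAdj (f k) (f u') ↔ ftot k u' = true := by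
    intro k u'
    simp [Trigraph.TotAdj, ftot, hblack, hred]
  set Q := Trigraph.mergeSetoid P (f u) (f v) with hQdef
  have hQr : ∀ z z' : V, Q.r z z' ↔
      (P.r z z' ∨ (P.r z (f u) ∧ P.r (f v) z') ∨ (P.r z (f v) ∧ P.r (f u) z')) :=
    fun _ _ => Iff.rfl
  have hQsep : ∀ k k' : FIdx, Q.r (f k) (f k') →
      k = k' ∨ (k = u ∧ k' = v) ∨ (k = v ∧ k' = u) := by
    intro k k' h
    rcases (hQr _ _).1 h with h | ⟨h1, h2⟩ | ⟨h1, h2⟩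
    · exact Or.inl (hsep' _ _ h)
    · exact Or.inr (Or.inl ⟨hsep' _ _ h1, (hsep' _ _ h2).symm⟩)
    · exact Or.inr (Or.inr ⟨hsep' _ _ h1, (hsep' _ _ h2).symm⟩)
  have hQvu : Q.r (f v) (f u) :=
    (hQr _ _).2 (Or.inr (Or.inr ⟨P.iseqv.refl _, P.iseqv.refl _⟩))
  have hmkvu : Quotient.mk Q (f v) = Quotient.mk Q (f u) := Quotient.sound hQvu
  -- every good index yields a red neighbor of the contracted vertex
  have hadj : ∀ k : FIdx, fgood u v k = true →
      (G.quot Q).red.Adj (Quotient.mk Q (f u)) (Quotient.mk Q (f k)) := by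
    intro k hk
    have hk' : (k ≠ u ∧ k ≠ v) ∧ (ftot k u = true ∨ ftot k v = true) ∧
        ¬ (fblack k u = true ∧ fblack k v = true) := by
      simp only [fgood, Bool.and_eq_true, Bool.or_eq_true, Bool.not_eq_true',
        decide_eq_false_iff_not, Bool.and_eq_false_iff] at hk
      refine ⟨⟨hk.1.1.1, hk.1.1.2⟩, hk.1.2, ?_⟩
      rcases hk.2 with h | h <;> simp [h]
    obtain ⟨⟨hku, hkv⟩, htotk, hnb⟩ := hk'
    refine ⟨?_, ?_, ?_⟩
    · intro heq
      rcases hQsep u k (Quotient.exact heq) with h | ⟨_, h⟩ | ⟨h, _⟩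
      · exact hku h.symm
      · exact hkv h
      · exact huv h
    · intro hall
      rcases (not_and_or.mp hnb) with h | h
      · exact h ((hblack k u).1 ((hall (f u) (f k) rfl rfl).symm))
      · exact h ((hblack k v).1 ((hall (f v) (f k) hmkvu rfl).symm))
    · rcases htotk with h | h
      · exact ⟨f u, f k, rfl, rfl, G.totAdj_symm ((htot k u).2 h)⟩
      · exact ⟨f v, f k, hmkvu, rfl, G.totAdj_symm ((htot k v).2 h)⟩
  -- count
  set s : Finset FIdx := Finset.univ.filter (fun k : FIdx => fgood u v k = true) with hs
  have hinjOn : Set.InjOn (fun k : FIdx => Quotient.mk Q (f k)) ↑s := by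
    intro k hk k' hk' h
    have hgk : fgood u v k = true := (Finset.mem_filter.mp hk).2
    have hgk' : fgood u v k' = true := (Finset.mem_filter.mp hk').2
    have hku : k ≠ u ∧ k ≠ v := by
      simp only [fgood, Bool.and_eq_true, Bool.not_eq_true',
        decide_eq_false_iff_not] at hgk
      exact ⟨hgk.1.1.1, hgk.1.1.2⟩
    have hk'u : k' ≠ u ∧ k' ≠ v := by
      simp only [fgood, Bool.and_eq_true, Bool.not_eq_true',
        decide_eq_false_iff_not] at hgk'
      exact ⟨hgk'.1.1.1, hgk'.1.1.2⟩
    rcases hQsep k k' (Quotient.exact h) with h' | ⟨h', _⟩ | ⟨h', _⟩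
    · exact h'
    · exact absurd h' hku.1
    · exact absurd h' hku.2
  have himg : (s.image (fun k : FIdx => Quotient.mk Q (f k))).card = s.card :=
    Finset.card_image_of_injOn hinjOn
  have hsub : ↑(s.image (fun k : FIdx => Quotient.mk Q (f k))) ⊆
      (G.quot Q).red.neighborSet (Quotient.mk Q (f u)) := by
    intro w hw
    simp only [Finset.coe_image, Set.mem_image, Finset.mem_coe] at hw
    obtain ⟨k, hk, rfl⟩ := hw
    exact hadj k (Finset.mem_filter.mp hk).2
  calc 5 ≤ s.card := hcard
    _ = (s.image (fun k : FIdx => Quotient.mk Q (f k))).card := himg.symm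
    _ = (↑(s.image (fun k : FIdx => Quotient.mk Q (f k))) : Set (Quotient Q)).ncard :=
        (Set.ncard_coe_finset _).symm
    _ ≤ ((G.quot Q).red.neighborSet (Quotient.mk Q (f u))).ncard :=
        Set.ncard_le_ncard hsub (Set.toFinite _)
end

section
/- Let G be a trigraph containing a fence gadget F (with bipartition (A, B)) attached to a set S and satisfying the attachment rule in G. Consider a partial contraction sequence from G and its first contraction that involves a pair of vertices of V(F) (so before this contraction every vertex of V(F) lies in its own part). If this contraction involves some a_i ∈ A and some b_j ∈ B, then the created vertex has red edges to at least 3 distinct parts containing vertices of V(F). -/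
open Trigraph

open Trigraph in
/-- Encoding of suitable fence vertices: `inl k` stands for `a k`, `inr k` for `b k`.
`goodz i j z` says the vertex is distinct from the two merged fence vertices `a i`, `b j`,
is (tot-)adjacent to one of them, and is non-black-adjacent to one of them. -/
def goodz (i j : Fin 6) (z : Fin 6 ⊕ Fin 6) : Prop :=
  Sum.elim
    (fun k => k ≠ i ∧
      ((k = i+1 ∨ i = k+1) ∨ (j = k ∨ (j : ℕ) = (k : ℕ)+1) ∨ (k = 5 ∧ j = 0)) ∧
      (¬(k = i+1 ∨ i = k+1) ∨ ¬(k = 5 ∧ j = 0)))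
    (fun k => k ≠ j ∧
      ((k = j+1 ∨ j = k+1) ∨ (k = i ∨ (k : ℕ) = (i : ℕ)+1) ∨ (i = 5 ∧ k = 0)) ∧
      (¬(k = j+1 ∨ j = k+1) ∨ ¬(i = 5 ∧ k = 0))) z

instance (i j : Fin 6) : DecidablePred (goodz i j) := fun z => by
  cases z <;> dsimp [goodz] <;> infer_instance

theorem exists3good (i j : Fin 6) : ∃ z₁ z₂ z₃ : Fin 6 ⊕ Fin 6,
    z₁ ≠ z₂ ∧ z₁ ≠ z₃ ∧ z₂ ≠ z₃ ∧ goodz i j z₁ ∧ goodz i j z₂ ∧ goodz i j z₃ := by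
  revert i j; decide

namespace Trigraph

variable {V : Type} {G : Trigraph V} {a b : Fin 6 → V} {S X : Set V}

lemma merge_r_iff (P : Setoid V) (u v s t : V) :
    (mergeSetoid P u v).r s t ↔
      (P.r s t ∨ (P.r s u ∧ P.r v t) ∨ (P.r s v ∧ P.r u t)) := Iff.rfl

lemma f_mem_fence (a b : Fin 6 → V) (z : Fin 6 ⊕ Fin 6) :
    Sum.elim a b z ∈ fenceSet a b := by
  cases z with
  | inl k => exact Or.inl ⟨k, rfl⟩
  | inr k => exact Or.inr ⟨k, rfl⟩

lemma f_inj (hF : FenceAttached G a b S X) : Function.Injective (Sum.elim a b) := by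
  rintro (k | k) (l | l) h
  · exact congrArg Sum.inl (hF.a_inj h)
  · exact absurd h (hF.ab_ne k l)
  · exact absurd h.symm (hF.ab_ne l k)
  · exact congrArg Sum.inr (hF.b_inj h)

lemma good_ne (hF : FenceAttached G a b S X) {i j : Fin 6} {z : Fin 6 ⊕ Fin 6}
    (hz : goodz i j z) : Sum.elim a b z ≠ a i ∧ Sum.elim a b z ≠ b j := by
  cases z with
  | inl k => exact ⟨fun h => hz.1 (hF.a_inj h), fun h => hF.ab_ne k j h⟩
  | inr k => exact ⟨fun h => hF.ab_ne i k h.symm, fun h => hz.1 (hF.b_inj h)⟩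

lemma quot_red_of (G : Trigraph V) (Q : Setoid V) {x c u u' : V}
    (hne : Quotient.mk Q x ≠ Quotient.mk Q c)
    (hu : Quotient.mk Q u = Quotient.mk Q x) (hnb : ¬ G.black.Adj u c)
    (hu' : Quotient.mk Q u' = Quotient.mk Q x) (ht : G.TotAdj u' c) :
    (G.quot Q).red.Adj (Quotient.mk Q x) (Quotient.mk Q c) :=
  ⟨hne, fun hall => hnb (hall u c hu rfl), u', c, hu', rfl, ht⟩

lemma good_classes_ne (hF : FenceAttached G a b S X) (P : Setoid V)
    (hsep : ∀ x ∈ fenceSet a b, ∀ y ∈ fenceSet a b, P.r x y → x = y)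
    {i j : Fin 6} {z z' : Fin 6 ⊕ Fin 6}
    (hz : goodz i j z) (hz' : goodz i j z') (hzz : z ≠ z') :
    Quotient.mk (mergeSetoid P (a i) (b j)) (Sum.elim a b z) ≠
      Quotient.mk (mergeSetoid P (a i) (b j)) (Sum.elim a b z') := by
  intro h
  have hr := (merge_r_iff P (a i) (b j) _ _).mp (Quotient.exact h)
  have hcf : Sum.elim a b z ∈ fenceSet a b := f_mem_fence a b z
  have hcf' : Sum.elim a b z' ∈ fenceSet a b := f_mem_fence a b z'
  have haf : a i ∈ fenceSet a b := Or.inl ⟨i, rfl⟩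
  have hbf : b j ∈ fenceSet a b := Or.inr ⟨j, rfl⟩
  rcases hr with h1 | ⟨h1, h2⟩ | ⟨h1, h2⟩
  · exact hzz (f_inj hF (hsep _ hcf _ hcf' h1))
  · exact (good_ne hF hz').2 (hsep _ hbf _ hcf' h2).symm
  · exact (good_ne hF hz').1 (hsep _ haf _ hcf' h2).symm

lemma good_adj (hF : FenceAttached G a b S X) (P : Setoid V)
    (hsep : ∀ x ∈ fenceSet a b, ∀ y ∈ fenceSet a b, P.r x y → x = y)
    {i j : Fin 6} (hne : ¬ P.r (a i) (b j)) {z : Fin 6 ⊕ Fin 6} (hz : goodz i j z) :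
    (G.quot (mergeSetoid P (a i) (b j))).red.Adj
      (Quotient.mk (mergeSetoid P (a i) (b j)) (a i))
      (Quotient.mk (mergeSetoid P (a i) (b j)) (Sum.elim a b z)) := by
  set Q := mergeSetoid P (a i) (b j) with hQ
  have hcf : Sum.elim a b z ∈ fenceSet a b := f_mem_fence a b z
  have haf : a i ∈ fenceSet a b := Or.inl ⟨i, rfl⟩
  have hbf : b j ∈ fenceSet a b := Or.inr ⟨j, rfl⟩
  have hcx : Sum.elim a b z ≠ a i := (good_ne hF hz).1
  have hcy : Sum.elim a b z ≠ b j := (good_ne hF hz).2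
  have hyx : Quotient.mk Q (b j) = Quotient.mk Q (a i) :=
    Quotient.sound (Or.inr (Or.inr ⟨P.refl _, P.refl _⟩))
  have hne' : Quotient.mk Q (a i) ≠ Quotient.mk Q (Sum.elim a b z) := by
    intro h
    rcases (merge_r_iff P (a i) (b j) _ _).mp (Quotient.exact h) with
      h1 | ⟨h1, h2⟩ | ⟨h1, h2⟩
    · exact hcx (hsep _ haf _ hcf h1).symm
    · exact hcy (hsep _ hbf _ hcf h2).symm
    · exact hne h1
  cases z with
  | inl k =>
    obtain ⟨hki, htot, hnb⟩ := hz
    have htot' : ∃ u, Quotient.mk Q u = Quotient.mk Q (a i) ∧ G.TotAdj u (a k) := by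
      rcases htot with h | h | h
      · exact ⟨a i, rfl, Or.inl ((hF.black_aa i k).mpr h)⟩
      · exact ⟨b j, hyx, Or.inr (((hF.red_ab k j).mpr h).symm)⟩
      · exact ⟨b j, hyx, Or.inl (((hF.black_ab k j).mpr h).symm)⟩
    have hnb' : ∃ u, Quotient.mk Q u = Quotient.mk Q (a i) ∧ ¬ G.black.Adj u (a k) := by
      rcases hnb with h | h
      · exact ⟨a i, rfl, fun hb => h ((hF.black_aa i k).mp hb)⟩
      · exact ⟨b j, hyx, fun hb => h ((hF.black_ab k j).mp hb.symm)⟩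
    obtain ⟨u', hu', ht⟩ := htot'
    obtain ⟨u, hu, hb⟩ := hnb'
    exact quot_red_of G Q hne' hu hb hu' ht
  | inr k =>
    obtain ⟨hkj, htot, hnb⟩ := hz
    have htot' : ∃ u, Quotient.mk Q u = Quotient.mk Q (a i) ∧ G.TotAdj u (b k) := by
      rcases htot with h | h | h
      · exact ⟨b j, hyx, Or.inl ((hF.black_bb j k).mpr h)⟩
      · exact ⟨a i, rfl, Or.inr ((hF.red_ab i k).mpr h)⟩
      · exact ⟨a i, rfl, Or.inl ((hF.black_ab i k).mpr h)⟩
    have hnb' : ∃ u, Quotient.mk Q u = Quotient.mk Q (a i) ∧ ¬ G.black.Adj u (b k) := by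
      rcases hnb with h | h
      · exact ⟨b j, hyx, fun hb => h ((hF.black_bb j k).mp hb)⟩
      · exact ⟨a i, rfl, fun hb => h ((hF.black_ab i k).mp hb)⟩
    obtain ⟨u', hu', ht⟩ := htot'
    obtain ⟨u, hu, hb⟩ := hnb'
    exact quot_red_of G Q hne' hu hb hu' ht

end Trigraph


theorem fence_cross_contraction_red_to_three_fence_parts {V : Type} [Fintype V]
    (G : Trigraph V) (a b : Fin 6 → V) (S X : Set V)
    (hF : FenceAttached G a b S X)
    (L : List (Setoid V)) (P : Setoid V)
    (hL : Trigraph.IsPartialContractionSeq L) (hP : L.getLast? = some P)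
    -- before this contraction, no part contains two vertices of `V(F)`
    (hsep : ∀ x ∈ fenceSet a b, ∀ y ∈ fenceSet a b, P.r x y → x = y)
    (x y : V) (hne : ¬ P.r x y)
    -- the contraction involves some `a_i ∈ A` and some `b_j ∈ B`
    (hxy : ∃ i j : Fin 6, x = a i ∧ y = b j) :
    3 ≤ Set.ncard {w : Quotient (Trigraph.mergeSetoid P x y) |
        (G.quot (Trigraph.mergeSetoid P x y)).red.Adj
          (Quotient.mk (Trigraph.mergeSetoid P x y) x) w ∧
        ∃ z ∈ fenceSet a b, Quotient.mk (Trigraph.mergeSetoid P x y) z = w} := by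
  obtain ⟨i, j, hx, hy⟩ := hxy
  subst hx; subst hy
  obtain ⟨z₁, z₂, z₃, h12, h13, h23, hg1, hg2, hg3⟩ := exists3good i j
  set Q := Trigraph.mergeSetoid P (a i) (b j) with hQ
  have hmem : ∀ z : Fin 6 ⊕ Fin 6, goodz i j z →
      Quotient.mk Q (Sum.elim a b z) ∈ {w : Quotient Q |
        (G.quot Q).red.Adj (Quotient.mk Q (a i)) w ∧
        ∃ v ∈ fenceSet a b, Quotient.mk Q v = w} :=
    fun z hz => ⟨Trigraph.good_adj hF P hsep hne hz,
      Sum.elim a b z, Trigraph.f_mem_fence a b z, rfl⟩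
  calc (3 : ℕ)
      = ({Quotient.mk Q (Sum.elim a b z₁), Quotient.mk Q (Sum.elim a b z₂),
          Quotient.mk Q (Sum.elim a b z₃)} : Set (Quotient Q)).ncard := by
        refine (Set.ncard_eq_three.mpr ⟨_, _, _, ?_, ?_, ?_, rfl⟩).symm
        · exact Trigraph.good_classes_ne hF P hsep hg1 hg2 h12
        · exact Trigraph.good_classes_ne hF P hsep hg1 hg3 h13
        · exact Trigraph.good_classes_ne hF P hsep hg2 hg3 h23
    _ ≤ _ := by
        refine Set.ncard_le_ncard ?_ (Set.toFinite _)
        rintro w (rfl | rfl | rfl)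
        · exact hmem z₁ hg1
        · exact hmem z₂ hg2
        · exact hmem z₃ hg3
end

section
/- Let G be a trigraph containing a fence gadget F (with bipartition (A, B)) attached to a set S and satisfying the attachment rule in G, with associated sets X and Y = V(G) \ (V(F) ∪ S ∪ X). In any partial 4-sequence from G, as long as no part contains two vertices of V(F), the following hold in every trigraph of the sequence: no part intersects both X and S, no part intersects both Y and S, and no part intersects both X and Y. -/
open Trigraph

/-- Key lemma: if a part contains `p` and `q`, and six vertices `c i` (pairwise in
distinct parts) are all black-adjacent to `p` and totally non-adjacent to `q`, then
the part of `p` has red degree at least 5 in the quotient, contradicting red degree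
at most 4. -/
lemma key_red_degree {V : Type} [Fintype V] (G : Trigraph V) (P : Setoid V)
    (hdeg : (G.quot P).RedDegLE 4)
    (c : Fin 6 → V)
    (hsep : ∀ i j, P.r (c i) (c j) → i = j)
    (p q : V) (hpq : P.r p q)
    (hblack : ∀ i, G.black.Adj (c i) p)
    (hnadj : ∀ i, ¬ G.TotAdj (c i) q) : False := by
  classical
  set f : Fin 6 → Quotient P := fun i => Quotient.mk P (c i) with hf
  have hfinj : Function.Injective f := by
    intro i j hij
    exact hsep i j (Quotient.exact hij)
  set pp : Quotient P := Quotient.mk P p with hpp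
  have hq : Quotient.mk P q = pp := Quotient.sound (P.iseqv.symm hpq)
  -- for each i with f i ≠ pp, there is a red edge between f i and pp in the quotient
  have hred : ∀ i : Fin 6, f i ≠ pp → (G.quot P).red.Adj pp (f i) := by
    intro i hne
    refine SimpleGraph.Adj.symm ?_
    show f i ≠ pp ∧ _
    refine ⟨hne, ?_, ⟨c i, p, rfl, rfl, Or.inl (hblack i)⟩⟩
    intro h
    exact hnadj i (Or.inl (h (c i) q rfl hq))
  -- the image of `{i | f i ≠ pp}` is contained in the red neighborhood of pp
  have hsub : f '' {i | f i ≠ pp} ⊆ (G.quot P).red.neighborSet pp := by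
    rintro _ ⟨i, hi, rfl⟩
    exact hred i hi
  have hcard1 : ({i : Fin 6 | f i ≠ pp} : Set (Fin 6)).ncard ≥ 5 := by
    have hcompl : ({i : Fin 6 | f i ≠ pp} : Set (Fin 6))ᶜ.ncard ≤ 1 := by
      rw [Set.ncard_le_one_iff (Set.toFinite _)]
      intro i j hi hj
      simp only [Set.mem_compl_iff, Set.mem_setOf_eq, not_not] at hi hj
      exact hfinj (hi.trans hj.symm)
    have htot := Set.ncard_add_ncard_compl ({i : Fin 6 | f i ≠ pp} : Set (Fin 6))
      (Set.toFinite _) (Set.toFinite _)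
    have : Nat.card (Fin 6) = 6 := by simp
    omega
  have him : (f '' {i | f i ≠ pp}).ncard = ({i : Fin 6 | f i ≠ pp} : Set (Fin 6)).ncard :=
    Set.ncard_image_of_injective _ hfinj
  have hfin : ((G.quot P).red.neighborSet pp).Finite := Set.toFinite _
  have hle : (f '' {i | f i ≠ pp}).ncard ≤ ((G.quot P).red.neighborSet pp).ncard :=
    Set.ncard_le_ncard hsub hfin
  have := hdeg pp
  omega

theorem fence_no_part_mixing_X_S_Y {V : Type} [Fintype V]
    (G : Trigraph V) (a b : Fin 6 → V) (S X : Set V)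
    (hF : FenceAttached G a b S X)
    (L : List (Setoid V)) (hL : G.IsPartialSeq 4 L)
    (P : Setoid V) (hP : P ∈ L)
    -- as long as no part contains two vertices of `V(F)`
    (hsep : ∀ x ∈ fenceSet a b, ∀ y ∈ fenceSet a b, P.r x y → x = y) :
    -- no part intersects both `X` and `S`
    (∀ x ∈ X, ∀ z ∈ S, ¬ P.r x z) ∧
    -- no part intersects both `Y` and `S`
    (∀ y ∈ (Set.univ \ (fenceSet a b ∪ S ∪ X) : Set V), ∀ z ∈ S, ¬ P.r y z) ∧
    -- no part intersects both `X` and `Y`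
    (∀ x ∈ X, ∀ y ∈ (Set.univ \ (fenceSet a b ∪ S ∪ X) : Set V), ¬ P.r x y) := by
  have hdeg : (G.quot P).RedDegLE 4 := hL.2 P hP
  have haF : ∀ i : Fin 6, a i ∈ fenceSet a b := fun i => Or.inl ⟨i, rfl⟩
  have hbF : ∀ i : Fin 6, b i ∈ fenceSet a b := fun i => Or.inr ⟨i, rfl⟩
  have hsepa : ∀ i j, P.r (a i) (a j) → i = j := fun i j h =>
    hF.a_inj (hsep _ (haF i) _ (haF j) h)
  have hsepb : ∀ i j, P.r (b i) (b j) → i = j := fun i j h =>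
    hF.b_inj (hsep _ (hbF i) _ (hbF j) h)
  -- b_i is black-adjacent to every vertex of X
  have hbX : ∀ (i : Fin 6), ∀ x ∈ X, G.black.Adj (b i) x := by
    intro i x hx
    have hxF : x ∉ fenceSet a b := fun h => hF.X_disj x hx (Or.inl h)
    exact (hF.black_b_out i x hxF).mpr hx
  -- b_i is totally non-adjacent to every vertex of S
  have hbS : ∀ (i : Fin 6), ∀ z ∈ S, ¬ G.TotAdj (b i) z := by
    intro i z hz h
    have hzF : z ∉ fenceSet a b := hF.S_disj z hz
    rcases h with h | h
    · exact hF.X_disj z ((hF.black_b_out i z hzF).mp h) (Or.inr hz)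
    · exact hzF (hF.red_closed _ (hbF i) z h)
  -- b_i is totally non-adjacent to every vertex of Y
  have hbY : ∀ (i : Fin 6), ∀ y ∈ (Set.univ \ (fenceSet a b ∪ S ∪ X) : Set V),
      ¬ G.TotAdj (b i) y := by
    intro i y hy h
    have hyF : y ∉ fenceSet a b := fun hh => hy.2 (Or.inl (Or.inl hh))
    rcases h with h | h
    · exact hy.2 (Or.inr ((hF.black_b_out i y hyF).mp h))
    · exact hyF (hF.red_closed _ (hbF i) y h)
  refine ⟨?_, ?_, ?_⟩
  · -- X and S
    intro x hx z hz hr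
    exact key_red_degree G P hdeg b hsepb x z hr (fun i => hbX i x hx)
      (fun i => hbS i z hz)
  · -- Y and S
    intro y hy z hz hr
    have hzF : z ∉ fenceSet a b := hF.S_disj z hz
    have hblack : ∀ i, G.black.Adj (a i) z := fun i =>
      (hF.black_a_out i z hzF).mpr (Or.inr hz)
    have hnadj : ∀ i, ¬ G.TotAdj (a i) y := by
      intro i h
      have hyF : y ∉ fenceSet a b := fun hh => hy.2 (Or.inl (Or.inl hh))
      rcases h with h | h
      · rcases (hF.black_a_out i y hyF).mp h with h' | h'
        · exact hy.2 (Or.inr h')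
        · exact hy.2 (Or.inl (Or.inr h'))
      · exact hyF (hF.red_closed _ (haF i) y h)
    exact key_red_degree G P hdeg a hsepa z y (P.iseqv.symm hr) hblack hnadj
  · -- X and Y
    intro x hx y hy hr
    exact key_red_degree G P hdeg b hsepb x y hr (fun i => hbX i x hx)
      (fun i => hbY i y hy)
end

section
/- Let G be a trigraph containing a fence gadget F (with bipartition (A, B)) attached to a set S and satisfying the attachment rule in G. In any partial 4-sequence from G, the first contraction that involves a pair of vertices consisting of a vertex of V(F) and a vertex of V(F) ∪ S can only occur at a moment when S is contained in a single part (i.e., S has already been contracted into a single vertex). -/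
open Trigraph

namespace FenceAux

abbrev FCode := Fin 6 ⊕ Fin 6
abbrev GCode := FCode ⊕ Unit
abbrev WCode := FCode ⊕ Bool

def kTot : FCode → FCode → Bool
  | .inl i, .inl j => decide (j = i + 1 ∨ i = j + 1)
  | .inr i, .inr j => decide (j = i + 1 ∨ i = j + 1)
  | .inl i, .inr j => decide ((i = 5 ∧ j = 0) ∨ j = i ∨ (j : ℕ) = (i : ℕ) + 1)
  | .inr j, .inl i => decide ((i = 5 ∧ j = 0) ∨ j = i ∨ (j : ℕ) = (i : ℕ) + 1)

def kNB : FCode → FCode → Bool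
  | .inl i, .inl j => ! decide (j = i + 1 ∨ i = j + 1)
  | .inr i, .inr j => ! decide (j = i + 1 ∨ i = j + 1)
  | .inl i, .inr j => ! decide (i = 5 ∧ j = 0)
  | .inr j, .inl i => ! decide (i = 5 ∧ j = 0)

def kTotW : GCode → WCode → Bool
  | .inl c, .inl d => kTot c d
  | .inl (.inl _), .inr _ => true
  | .inl (.inr _), .inr _ => false
  | .inr _, .inl (.inl _) => true
  | .inr _, .inl (.inr _) => false
  | .inr _, .inr _ => false

def kNBW : GCode → WCode → Bool
  | .inl c, .inl d => kNB c d
  | .inl (.inl _), .inr _ => false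
  | .inl (.inr _), .inr _ => true
  | .inr _, .inl (.inl _) => false
  | .inr _, .inl (.inr _) => true
  | .inr _, .inr _ => false

theorem kTotW_inl_inl (c d : FCode) : kTotW (Sum.inl c) (Sum.inl d) = kTot c d := by
  rcases c with i | i <;> rcases d with j | j <;> rfl

theorem kNBW_inl_inl (c d : FCode) : kNBW (Sum.inl c) (Sum.inl d) = kNB c d := by
  rcases c with i | i <;> rcases d with j | j <;> rfl

def suffW (cf : FCode) (cg : GCode) (x : WCode) : Bool :=
  (match x with
   | .inl d => decide (d ≠ cf) && decide ((Sum.inl d : GCode) ≠ cg)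
   | .inr _ => cg.isLeft) &&
  (kTotW (Sum.inl cf) x || kTotW cg x) &&
  (kNBW (Sum.inl cf) x || kNBW cg x)

set_option maxRecDepth 10000 in
theorem core : ∀ (cf : FCode) (cg : GCode), (Sum.inl cf : GCode) ≠ cg →
    5 ≤ (Finset.univ.filter fun x : WCode => suffW cf cg x = true).card := by decide

variable {V : Type}

def iotaF (a b : Fin 6 → V) : FCode → V := Sum.elim a b

def iotaW (a b : Fin 6 → V) (z z' : V) : WCode → V :=
  Sum.elim (iotaF a b) (fun t => bif t then z' else z)

def iotaG (a b : Fin 6 → V) (g : V) : GCode → V :=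
  Sum.elim (iotaF a b) (fun _ => g)

theorem iotaF_mem (a b : Fin 6 → V) (c : FCode) : iotaF a b c ∈ fenceSet a b := by
  rcases c with i | i
  · exact Or.inl ⟨i, rfl⟩
  · exact Or.inr ⟨i, rfl⟩

theorem bridgeT (G : Trigraph V) (a b : Fin 6 → V) (S X : Set V)
    (hF : FenceAttached G a b S X) :
    ∀ c d : FCode, kTot c d = true → G.TotAdj (iotaF a b c) (iotaF a b d) := by
  rintro (i | i) (j | j) h <;> simp only [kTot, decide_eq_true_eq] at h
  · exact Or.inl ((hF.black_aa i j).mpr h)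
  · rcases h with h | h
    · exact Or.inl ((hF.black_ab i j).mpr h)
    · exact Or.inr ((hF.red_ab i j).mpr h)
  · rcases h with h | h
    · exact Or.inl ((hF.black_ab j i).mpr h).symm
    · exact Or.inr ((hF.red_ab j i).mpr h).symm
  · exact Or.inl ((hF.black_bb i j).mpr h)

theorem bridgeN (G : Trigraph V) (a b : Fin 6 → V) (S X : Set V)
    (hF : FenceAttached G a b S X) :
    ∀ c d : FCode, kNB c d = true → ¬ G.black.Adj (iotaF a b c) (iotaF a b d) := by
  rintro (i | i) (j | j) h <;>
    simp only [kNB, Bool.not_eq_true', decide_eq_false_iff_not] at h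
  · exact fun hb => h ((hF.black_aa i j).mp hb)
  · exact fun hb => h ((hF.black_ab i j).mp hb)
  · exact fun hb => h ((hF.black_ab j i).mp hb.symm)
  · exact fun hb => h ((hF.black_bb i j).mp hb)

theorem iotaF_inj {a b : Fin 6 → V} {S X : Set V} {G : Trigraph V}
    (hF : FenceAttached G a b S X) : Function.Injective (iotaF a b) := by
  rintro (i | i) (j | j) h
  · exact congrArg Sum.inl (hF.a_inj h)
  · exact absurd h (hF.ab_ne i j)
  · exact absurd h.symm (hF.ab_ne j i)
  · exact congrArg Sum.inr (hF.b_inj h)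

theorem key {V : Type} [Fintype V]
    (G : Trigraph V) (a b : Fin 6 → V) (S X : Set V)
    (hF : FenceAttached G a b S X) (P Q : Setoid V) (u v : V)
    (huv : ¬ P.r u v)
    (hQ : ∀ x y, Q.r x y ↔ (P.r x y ∨ (P.r x u ∧ P.r v y) ∨ (P.r x v ∧ P.r u y)))
    (hdeg : (G.quot Q).RedDegLE 4)
    (hfirst : ∀ f ∈ fenceSet a b, ∀ g ∈ fenceSet a b ∪ S, f ≠ g → ¬ P.r f g)
    (f g : V) (hf : f ∈ fenceSet a b) (hg : g ∈ fenceSet a b ∪ S)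
    (hfu : P.r f u) (hgv : P.r g v)
    (z z' : V) (hz : z ∈ S) (hz' : z' ∈ S) (hzz' : ¬ P.r z z') : False := by
  classical
  have mk_eq : ∀ x y : V, Quotient.mk Q x = Quotient.mk Q y ↔ Q.r x y :=
    fun x y => ⟨Quotient.exact, Quotient.sound⟩
  -- codes
  obtain ⟨cf, hcf⟩ : ∃ c : FCode, f = iotaF a b c := by
    rcases hf with ⟨i, hi⟩ | ⟨i, hi⟩
    · exact ⟨.inl i, hi.symm⟩
    · exact ⟨.inr i, hi.symm⟩
  have hfg : f ≠ g := by
    rintro rfl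
    exact huv (P.iseqv.trans (P.iseqv.symm hfu) hgv)
  obtain ⟨cg, hgcode, hgS⟩ : ∃ cg : GCode,
      (∀ d, cg = Sum.inl d → g = iotaF a b d) ∧ (cg.isRight = true → g ∈ S) := by
    rcases hg with hgF | hgSm
    · rcases hgF with ⟨i, hi⟩ | ⟨i, hi⟩
      · exact ⟨.inl (.inl i), fun d hd => by cases Sum.inl.inj hd; exact hi.symm,
          fun h => by simp at h⟩
      · exact ⟨.inl (.inr i), fun d hd => by cases Sum.inl.inj hd; exact hi.symm,
          fun h => by simp at h⟩
    · exact ⟨.inr (), fun d hd => (by cases hd), fun _ => hgSm⟩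
  have hcfcg : (Sum.inl cf : GCode) ≠ cg := by
    intro h
    exact hfg (by rw [hcf, hgcode cf h.symm])
  have hzS : ∀ t : Bool, iotaW a b z z' (Sum.inr t) ∈ S := by
    rintro (_ | _)
    · exact hz
    · exact hz'
  have hWmem : ∀ x : WCode, iotaW a b z z' x ∈ fenceSet a b ∪ S := by
    rintro (d | t)
    · exact Or.inl (iotaF_mem a b d)
    · exact Or.inr (hzS t)
  have hgι : iotaG a b g cg = g := by
    rcases hcg : cg with d | t
    · exact (hgcode d hcg).symm
    · rfl
  -- bridges
  have bT : ∀ (c : GCode) (x : WCode), kTotW c x = true →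
      (c.isRight = true → g ∈ S) → G.TotAdj (iotaG a b g c) (iotaW a b z z' x) := by
    rintro (c | t) (d | t') h hg'
    · rw [kTotW_inl_inl] at h
      exact bridgeT G a b S X hF c d h
    · rcases c with i | i
      · exact Or.inl ((hF.black_a_out i _ (hF.S_disj _ (hzS t'))).mpr (Or.inr (hzS t')))
      · simp [kTotW] at h
    · have hgs := hg' rfl
      rcases d with i | i
      · exact Or.inl (((hF.black_a_out i g (hF.S_disj g hgs)).mpr (Or.inr hgs)).symm)
      · simp [kTotW] at h
    · simp [kTotW] at h
  have bN : ∀ (c : GCode) (x : WCode), kNBW c x = true →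
      (c.isRight = true → g ∈ S) → ¬ G.black.Adj (iotaG a b g c) (iotaW a b z z' x) := by
    rintro (c | t) (d | t') h hg'
    · rw [kNBW_inl_inl] at h
      exact bridgeN G a b S X hF c d h
    · rcases c with i | i
      · simp [kNBW] at h
      · intro hb
        have := (hF.black_b_out i _ (hF.S_disj _ (hzS t'))).mp hb
        exact hF.X_disj _ this (Or.inr (hzS t'))
    · have hgs := hg' rfl
      rcases d with i | i
      · simp [kNBW] at h
      · intro hb
        have := (hF.black_b_out i g (hF.S_disj g hgs)).mp hb.symm
        exact hF.X_disj _ this (Or.inr hgs)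
    · simp [kNBW] at h
  -- the witness finset
  set FS : Finset WCode := Finset.univ.filter (fun x => suffW cf cg x = true) with hFS
  have hsuff : ∀ x ∈ FS, ((match x with
      | .inl d => decide (d ≠ cf) && decide ((Sum.inl d : GCode) ≠ cg)
      | .inr _ => cg.isLeft) = true) ∧
      (kTotW (Sum.inl cf) x = true ∨ kTotW cg x = true) ∧
      (kNBW (Sum.inl cf) x = true ∨ kNBW cg x = true) := by
    intro x hx
    have h := (Finset.mem_filter.mp hx).2
    simpa only [suffW, Bool.and_eq_true, Bool.or_eq_true, and_assoc] using h
  have hWne_f : ∀ x ∈ FS, iotaW a b z z' x ≠ f := by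
    intro x hx
    obtain ⟨hm, -, -⟩ := hsuff x hx
    rcases x with d | t
    · simp only [Bool.and_eq_true, decide_eq_true_eq] at hm
      exact fun h => hm.1 (iotaF_inj hF (h.trans hcf))
    · intro h
      have hmem : iotaW a b z z' (Sum.inr t) ∈ S := hzS t
      rw [h] at hmem
      exact hF.S_disj f hmem hf
  have hWne_g : ∀ x ∈ FS, iotaW a b z z' x ≠ g := by
    intro x hx
    obtain ⟨hm, -, -⟩ := hsuff x hx
    rcases x with d | t
    · simp only [Bool.and_eq_true, decide_eq_true_eq] at hm
      rcases hcg : cg with d' | t0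
      · rw [hgcode d' hcg]
        intro h
        exact hm.2 (by rw [hcg]; exact congrArg Sum.inl (iotaF_inj hF h))
      · intro h
        have hgs : g ∈ S := hgS (by rw [hcg]; rfl)
        have hmem : iotaW a b z z' (Sum.inl d) ∈ fenceSet a b := iotaF_mem a b d
        rw [h] at hmem
        exact hF.S_disj g hgs hmem
    · rcases hcg : cg with d' | t0
      · intro h
        have hmem : iotaW a b z z' (Sum.inr t) ∈ S := hzS t
        rw [h] at hmem
        exact hF.S_disj g hmem (by rw [hgcode d' hcg]; exact iotaF_mem a b d')
      · rw [hcg] at hm; simp at hm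
  have hPWf : ∀ x ∈ FS, ¬ P.r (iotaW a b z z' x) f := by
    intro x hx h
    exact hfirst f hf (iotaW a b z z' x) (hWmem x)
      (fun he => hWne_f x hx he.symm) (P.iseqv.symm h)
  have hPWg : ∀ x ∈ FS, ¬ P.r (iotaW a b z z' x) g := by
    intro x hx h
    rcases hcg : cg with d' | t0
    · have hgF : g ∈ fenceSet a b := by rw [hgcode d' hcg]; exact iotaF_mem a b d'
      exact hfirst g hgF (iotaW a b z z' x) (hWmem x)
        (fun he => hWne_g x hx he.symm) (P.iseqv.symm h)
    · have hgs : g ∈ S := hgS (by rw [hcg]; rfl)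
      have hxF : iotaW a b z z' x ∈ fenceSet a b := by
        obtain ⟨hm, -, -⟩ := hsuff x hx
        rcases x with d | t
        · exact iotaF_mem a b d
        · rw [hcg] at hm; simp at hm
      exact hfirst (iotaW a b z z' x) hxF g (Or.inr hgs) (hWne_g x hx) h
  have hPWu : ∀ x ∈ FS, ¬ P.r (iotaW a b z z' x) u := by
    intro x hx h
    exact hPWf x hx (P.iseqv.trans h (P.iseqv.symm hfu))
  have hPWv : ∀ x ∈ FS, ¬ P.r (iotaW a b z z' x) v := by
    intro x hx h
    exact hPWg x hx (P.iseqv.trans h (P.iseqv.symm hgv))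
  have hzne : z ≠ z' := fun h => by cases h; exact hzz' (P.iseqv.refl z)
  have hιWne : ∀ x y : WCode, x ≠ y → iotaW a b z z' x ≠ iotaW a b z z' y := by
    rintro (d | t) (e | t') hne
    · exact fun h => hne (congrArg Sum.inl (iotaF_inj hF h))
    · intro h
      have hmem : iotaW a b z z' (Sum.inr t') ∈ S := hzS t'
      rw [← h] at hmem
      exact hF.S_disj _ hmem (iotaF_mem a b d)
    · intro h
      have hmem : iotaW a b z z' (Sum.inr t) ∈ S := hzS t
      rw [h] at hmem
      exact hF.S_disj _ hmem (iotaF_mem a b e)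
    · rcases t with _ | _ <;> rcases t' with _ | _
      · exact absurd rfl hne
      · exact fun h => hzne h
      · exact fun h => hzne h.symm
      · exact absurd rfl hne
  have hPWW : ∀ x ∈ FS, ∀ y ∈ FS, x ≠ y →
      ¬ P.r (iotaW a b z z' x) (iotaW a b z z' y) := by
    intro x hx y hy hne
    have hne' := hιWne x y hne
    rcases x with d | t
    · exact hfirst (iotaW a b z z' (Sum.inl d)) (iotaF_mem a b d)
        (iotaW a b z z' y) (hWmem y) hne'
    · rcases y with e | t'
      · exact fun h => hfirst (iotaW a b z z' (Sum.inl e)) (iotaF_mem a b e) _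
          (Or.inr (hzS t)) (Ne.symm hne') (P.iseqv.symm h)
      · rcases t with _ | _ <;> rcases t' with _ | _
        · exact absurd rfl hne
        · exact hzz'
        · exact fun h => hzz' (P.iseqv.symm h)
        · exact absurd rfl hne
  -- red adjacency of each witness part to the merged part
  have hQc : ∀ c : GCode, (c = Sum.inl cf ∨ c = cg) → Q.r (iotaG a b g c) f := by
    rintro c (rfl | rfl)
    · show Q.r (iotaF a b cf) f
      rw [← hcf]
    · rw [hgι]
      exact (hQ g f).mpr (Or.inr (Or.inr ⟨hgv, P.iseqv.symm hfu⟩))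
  have hQne : ∀ x ∈ FS, ¬ Q.r f (iotaW a b z z' x) := by
    intro x hx h
    rcases (hQ _ _).mp h with h | ⟨h1, h2⟩ | ⟨h1, h2⟩
    · exact hPWf x hx (P.iseqv.symm h)
    · exact hPWv x hx (P.iseqv.symm h2)
    · exact hfirst f hf g hg hfg (P.iseqv.trans h1 (P.iseqv.symm hgv))
  have hred : ∀ x ∈ FS, Quotient.mk Q (iotaW a b z z' x) ∈
      (G.quot Q).red.neighborSet (Quotient.mk Q f) := by
    intro x hx
    obtain ⟨-, hT, hN⟩ := hsuff x hx
    show (G.quot Q).red.Adj (Quotient.mk Q f) (Quotient.mk Q (iotaW a b z z' x))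
    refine (⟨?_, ?_, ?_⟩ : _ ≠ _ ∧ _ ∧ _)
    · intro h
      exact hQne x hx ((mk_eq _ _).mp h)
    · intro hall
      rcases hN with h | h
      · exact bN (Sum.inl cf) x h (fun hh => by simp at hh)
          (hall (iotaG a b g (Sum.inl cf)) (iotaW a b z z' x)
            (Quotient.sound (hQc _ (Or.inl rfl))) rfl)
      · exact bN cg x h hgS
          (hall (iotaG a b g cg) (iotaW a b z z' x)
            (Quotient.sound (hQc _ (Or.inr rfl))) rfl)
    · rcases hT with h | h
      · exact ⟨iotaG a b g (Sum.inl cf), iotaW a b z z' x,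
          Quotient.sound (hQc _ (Or.inl rfl)), rfl,
          bT (Sum.inl cf) x h (fun hh => by simp at hh)⟩
      · exact ⟨iotaG a b g cg, iotaW a b z z' x,
          Quotient.sound (hQc _ (Or.inr rfl)), rfl, bT cg x h hgS⟩
  -- counting
  have hfin : Finite (Quotient Q) := Quotient.finite Q
  have hinjOn : Set.InjOn (fun x => Quotient.mk Q (iotaW a b z z' x)) ↑FS := by
    intro x hx y hy h
    by_contra hne
    refine hPWW x (Finset.mem_coe.mp hx) y (Finset.mem_coe.mp hy) hne ?_
    rcases (hQ _ _).mp ((mk_eq _ _).mp h) with h' | ⟨h1, h2⟩ | ⟨h1, h2⟩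
    · exact h'
    · exact absurd h1 (hPWu x (Finset.mem_coe.mp hx))
    · exact absurd h1 (hPWv x (Finset.mem_coe.mp hx))
  have hsub : (fun x => Quotient.mk Q (iotaW a b z z' x)) '' ↑FS ⊆
      (G.quot Q).red.neighborSet (Quotient.mk Q f) := by
    rintro _ ⟨x, hx, rfl⟩
    exact hred x (Finset.mem_coe.mp hx)
  have hcard : 5 ≤ ((G.quot Q).red.neighborSet (Quotient.mk Q f)).ncard := by
    calc 5 ≤ FS.card := core cf cg hcfcg
      _ = (↑FS : Set WCode).ncard := (Set.ncard_coe_finset FS).symm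
      _ = ((fun x => Quotient.mk Q (iotaW a b z z' x)) '' ↑FS).ncard :=
          (Set.ncard_image_of_injOn hinjOn).symm
      _ ≤ _ := Set.ncard_le_ncard hsub (Set.toFinite _)
  have := hdeg (Quotient.mk Q f)
  omega

end FenceAux

open FenceAux in
theorem fence_first_contraction_after_S_single {V : Type} [Fintype V]
    (G : Trigraph V) (a b : Fin 6 → V) (S X : Set V)
    (hF : FenceAttached G a b S X)
    (L : List (Setoid V)) (P : Setoid V) (u v : V) (huv : ¬ P.r u v)
    (hL : G.IsPartialSeq 4 (L ++ [Trigraph.mergeSetoid P u v]))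
    (hP : L.getLast? = some P)
    -- this is the first contraction involving a pair consisting of a vertex of
    -- `V(F)` and a vertex of `V(F) ∪ S`
    (hfirst : ∀ f ∈ fenceSet a b, ∀ g ∈ fenceSet a b ∪ S, f ≠ g → ¬ P.r f g)
    (hinv : ∃ f ∈ fenceSet a b, ∃ g ∈ fenceSet a b ∪ S,
        (P.r f u ∧ P.r g v) ∨ (P.r f v ∧ P.r g u)) :
    -- `S` is already contained in a single part
    ∀ z ∈ S, ∀ z' ∈ S, P.r z z' := by
  by_contra hcon
  push_neg at hcon
  obtain ⟨z, hz, z', hz', hzz'⟩ := hcon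
  obtain ⟨f, hf, g, hg, hcase⟩ := hinv
  have hdeg : (G.quot (Trigraph.mergeSetoid P u v)).RedDegLE 4 :=
    hL.2 _ (by simp)
  rcases hcase with ⟨hfu, hgv⟩ | ⟨hfv, hgu⟩
  · exact key G a b S X hF P (Trigraph.mergeSetoid P u v) u v huv
      (fun x y => Iff.rfl) hdeg hfirst f g hf hg hfu hgv z z' hz hz' hzz'
  · exact key G a b S X hF P (Trigraph.mergeSetoid P u v) v u
      (fun h => huv (P.iseqv.symm h))
      (fun x y => by
        show (P.r x y ∨ (P.r x u ∧ P.r v y) ∨ (P.r x v ∧ P.r u y)) ↔ _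
        tauto)
      hdeg hfirst f g hf hg hfv hgu z z' hz hz' hzz'
end

section
/- Let G be a trigraph containing two vertical sets V^j (with vertical pair x^j, y^j) and V^{j'} (with vertical pair x^{j'}, y^{j'}) together with a propagation gadget (arc) from V^j to V^{j'}, where the fence gadget of V^j satisfies the attachment rule in G with x^{j'} belonging to its set X and y^{j'} belonging to its set Y, and the fence gadget of V^{j'} also satisfies the attachment rule in G. Then in any partial 4-sequence from G, any contraction involving a pair of vertices of V^{j'} can only occur at a moment when x^j and y^j lie in a common part (i.e., the pair x^j, y^j has already been contracted, possibly by that very contraction). -/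
open Trigraph

/-- The 14 vertices of a vertical set: the vertical pair `x, y` together with the
12 vertices of the fence gadget attached to `{x, y}`. -/
def verticalSet {V : Type} (x y : V) (a b : Fin 6 → V) : Set V :=
  {x, y} ∪ fenceSet a b


/-! ### Auxiliary development -/

section Aux

/-- An abstract 28-element vertex type indexing the two vertical sets and the
guarding fence. -/
inductive TT : Type
  | S0 | S1 | X0 | Y0
  | FA (i : Fin 6) | FB (i : Fin 6) | GA (i : Fin 6) | GB (i : Fin 6)
  deriving DecidableEq, Fintype

namespace TT

/-- one-sided table of certainly (black or red) adjacent pairs -/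
def lo0 : TT → TT → Bool
  | FA i, FA j => decide (j = i + 1 ∨ i = j + 1)
  | FB i, FB j => decide (j = i + 1 ∨ i = j + 1)
  | FA i, FB j => decide ((i = 5 ∧ j = 0) ∨ j = i ∨ (j : ℕ) = (i : ℕ) + 1)
  | GA i, GA j => decide (j = i + 1 ∨ i = j + 1)
  | GB i, GB j => decide (j = i + 1 ∨ i = j + 1)
  | GA i, GB j => decide ((i = 5 ∧ j = 0) ∨ j = i ∨ (j : ℕ) = (i : ℕ) + 1)
  | FA _, S0 => true
  | FA _, S1 => true
  | FA _, X0 => true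
  | FB _, X0 => true
  | GA _, X0 => true
  | GA _, Y0 => true
  | S0, X0 => true
  | S1, X0 => true
  | _, _ => false

/-- one-sided table of certainly non-black pairs -/
def nb0 : TT → TT → Bool
  | FA i, FA j => decide (¬ (j = i + 1 ∨ i = j + 1))
  | FB i, FB j => decide (¬ (j = i + 1 ∨ i = j + 1))
  | FA i, FB j => decide (¬ (i = 5 ∧ j = 0))
  | GA i, GA j => decide (¬ (j = i + 1 ∨ i = j + 1))
  | GB i, GB j => decide (¬ (j = i + 1 ∨ i = j + 1))
  | GA i, GB j => decide (¬ (i = 5 ∧ j = 0))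
  | FB _, S0 => true
  | FB _, S1 => true
  | FA _, Y0 => true
  | FB _, Y0 => true
  | FA _, GA _ => true
  | FA _, GB _ => true
  | FB _, GA _ => true
  | FB _, GB _ => true
  | GB _, X0 => true
  | GB _, Y0 => true
  | _, _ => false

def lo (f g : TT) : Bool := lo0 f g || lo0 g f

def nb (f g : TT) : Bool := nb0 f g || nb0 g f

/-- the certain "distinguishers" of a pair -/
def DD (f g : TT) : Finset TT :=
  Finset.univ.filter fun t => t ≠ f ∧ t ≠ g ∧ (lo f t ∨ lo g t) ∧ (nb f t ∨ nb g t)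

theorem five : ∀ f g : TT, f ≠ g →
    (f = S0 ∧ g = S1) ∨ (f = S1 ∧ g = S0) ∨ 5 ≤ (DD f g).card := by decide

end TT

/-- All hypotheses of the main theorem that concern the static configuration. -/
structure Setup {V : Type} (G : Trigraph V) where
  xj : V
  yj : V
  xj' : V
  yj' : V
  aj : Fin 6 → V
  bj : Fin 6 → V
  aj' : Fin 6 → V
  bj' : Fin 6 → V
  Xj : Set V
  Xj' : Set V
  hxyj : xj ≠ yj
  hxyj' : xj' ≠ yj'
  hFj : FenceAttached G aj bj {xj, yj} Xj
  hFj' : FenceAttached G aj' bj' {xj', yj'} Xj'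
  hx' : xj' ∈ Xj
  hy' : yj' ∉ fenceSet aj bj ∪ {xj, yj} ∪ Xj

namespace Setup

variable {V : Type} {G : Trigraph V} (S : Setup G)

/-- the 28 distinguished vertices -/
def emb : TT → V
  | .S0 => S.xj
  | .S1 => S.yj
  | .X0 => S.xj'
  | .Y0 => S.yj'
  | .FA i => S.aj i
  | .FB i => S.bj i
  | .GA i => S.aj' i
  | .GB i => S.bj' i

theorem xj_mem : S.xj ∈ ({S.xj, S.yj} : Set V) := Set.mem_insert _ _
theorem yj_mem : S.yj ∈ ({S.xj, S.yj} : Set V) := Set.mem_insert_of_mem _ rfl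
theorem xj'_mem : S.xj' ∈ ({S.xj', S.yj'} : Set V) := Set.mem_insert _ _
theorem yj'_mem : S.yj' ∈ ({S.xj', S.yj'} : Set V) := Set.mem_insert_of_mem _ rfl

theorem aj_mem (i : Fin 6) : S.aj i ∈ fenceSet S.aj S.bj := Or.inl ⟨i, rfl⟩
theorem bj_mem (i : Fin 6) : S.bj i ∈ fenceSet S.aj S.bj := Or.inr ⟨i, rfl⟩
theorem aj'_mem (i : Fin 6) : S.aj' i ∈ fenceSet S.aj' S.bj' := Or.inl ⟨i, rfl⟩
theorem bj'_mem (i : Fin 6) : S.bj' i ∈ fenceSet S.aj' S.bj' := Or.inr ⟨i, rfl⟩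

theorem xj_not_fj : S.xj ∉ fenceSet S.aj S.bj := S.hFj.S_disj _ S.xj_mem
theorem yj_not_fj : S.yj ∉ fenceSet S.aj S.bj := S.hFj.S_disj _ S.yj_mem
theorem xj'_not_fj' : S.xj' ∉ fenceSet S.aj' S.bj' := S.hFj'.S_disj _ S.xj'_mem
theorem yj'_not_fj' : S.yj' ∉ fenceSet S.aj' S.bj' := S.hFj'.S_disj _ S.yj'_mem
theorem xj'_not_fj : S.xj' ∉ fenceSet S.aj S.bj := fun h => S.hFj.X_disj _ S.hx' (Or.inl h)
theorem xj'_not_S : S.xj' ∉ ({S.xj, S.yj} : Set V) := fun h => S.hFj.X_disj _ S.hx' (Or.inr h)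
theorem xj_not_Xj : S.xj ∉ S.Xj := fun h => S.hFj.X_disj _ h (Or.inr S.xj_mem)
theorem yj_not_Xj : S.yj ∉ S.Xj := fun h => S.hFj.X_disj _ h (Or.inr S.yj_mem)
theorem xj'_not_Xj' : S.xj' ∉ S.Xj' := fun h => S.hFj'.X_disj _ h (Or.inr S.xj'_mem)
theorem yj'_not_Xj' : S.yj' ∉ S.Xj' := fun h => S.hFj'.X_disj _ h (Or.inr S.yj'_mem)
theorem yj'_not_fj : S.yj' ∉ fenceSet S.aj S.bj := fun h => S.hy' (Or.inl (Or.inl h))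
theorem yj'_not_S : S.yj' ∉ ({S.xj, S.yj} : Set V) := fun h => S.hy' (Or.inl (Or.inr h))
theorem yj'_not_Xj : S.yj' ∉ S.Xj := fun h => S.hy' (Or.inr h)

theorem notTot_fj {z : V} (hz : z ∉ fenceSet S.aj S.bj) (h1 : z ∉ S.Xj)
    (h2 : z ∉ ({S.xj, S.yj} : Set V)) :
    ∀ t ∈ fenceSet S.aj S.bj, ¬ G.TotAdj t z := by
  rintro t (⟨i, rfl⟩ | ⟨i, rfl⟩) (hb | hr)
  · rcases (S.hFj.black_a_out i z hz).mp hb with h | h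
    · exact h1 h
    · exact h2 h
  · exact hz (S.hFj.red_closed _ (S.aj_mem i) z hr)
  · exact h1 ((S.hFj.black_b_out i z hz).mp hb)
  · exact hz (S.hFj.red_closed _ (S.bj_mem i) z hr)

theorem notTot_fj' {z : V} (hz : z ∉ fenceSet S.aj' S.bj') (h1 : z ∉ S.Xj')
    (h2 : z ∉ ({S.xj', S.yj'} : Set V)) :
    ∀ t ∈ fenceSet S.aj' S.bj', ¬ G.TotAdj t z := by
  rintro t (⟨i, rfl⟩ | ⟨i, rfl⟩) (hb | hr)
  · rcases (S.hFj'.black_a_out i z hz).mp hb with h | h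
    · exact h1 h
    · exact h2 h
  · exact hz (S.hFj'.red_closed _ (S.aj'_mem i) z hr)
  · exact h1 ((S.hFj'.black_b_out i z hz).mp hb)
  · exact hz (S.hFj'.red_closed _ (S.bj'_mem i) z hr)

theorem black_aj_S (i : Fin 6) {z : V} (hzS : z ∈ ({S.xj, S.yj} : Set V)) :
    G.black.Adj (S.aj i) z :=
  (S.hFj.black_a_out i z (S.hFj.S_disj z hzS)).mpr (Or.inr hzS)

theorem black_aj_xj' (i : Fin 6) : G.black.Adj (S.aj i) S.xj' :=
  (S.hFj.black_a_out i _ S.xj'_not_fj).mpr (Or.inl S.hx')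

theorem black_bj_xj' (i : Fin 6) : G.black.Adj (S.bj i) S.xj' :=
  (S.hFj.black_b_out i _ S.xj'_not_fj).mpr S.hx'

theorem black_aj'_S' (i : Fin 6) {z : V} (hzS : z ∈ ({S.xj', S.yj'} : Set V)) :
    G.black.Adj (S.aj' i) z :=
  (S.hFj'.black_a_out i z (S.hFj'.S_disj z hzS)).mpr (Or.inr hzS)

theorem black_xj'_S {z : V} (hz : z ∈ ({S.xj, S.yj} : Set V)) : G.black.Adj S.xj' z :=
  S.hFj.X_black_S _ S.hx' z hz

theorem notTot_bj_S (i : Fin 6) {z : V} (hz : z ∈ ({S.xj, S.yj} : Set V)) :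
    ¬ G.TotAdj (S.bj i) z := by
  have hzf : z ∉ fenceSet S.aj S.bj := S.hFj.S_disj z hz
  rintro (hb | hr)
  · exact (fun hX => S.hFj.X_disj z hX (Or.inr hz)) ((S.hFj.black_b_out i z hzf).mp hb)
  · exact hzf (S.hFj.red_closed _ (S.bj_mem i) z hr)

theorem notTot_bj'_S' (i : Fin 6) {z : V} (hz : z ∈ ({S.xj', S.yj'} : Set V)) :
    ¬ G.TotAdj (S.bj' i) z := by
  have hzf : z ∉ fenceSet S.aj' S.bj' := S.hFj'.S_disj z hz
  rintro (hb | hr)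
  · exact (fun hX => S.hFj'.X_disj z hX (Or.inr hz)) ((S.hFj'.black_b_out i z hzf).mp hb)
  · exact hzf (S.hFj'.red_closed _ (S.bj'_mem i) z hr)

theorem fj_not_Xj' : ∀ t ∈ fenceSet S.aj S.bj, t ∉ S.Xj' := fun t ht hX =>
  S.notTot_fj S.yj'_not_fj S.yj'_not_Xj S.yj'_not_S t ht
    (Or.inl (S.hFj'.X_black_S t hX S.yj' S.yj'_mem))

theorem fj'_disj_fj : ∀ t ∈ fenceSet S.aj' S.bj', t ∉ fenceSet S.aj S.bj := by
  rintro t (⟨i, rfl⟩ | ⟨i, rfl⟩) htf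
  · exact S.notTot_fj S.yj'_not_fj S.yj'_not_Xj S.yj'_not_S _ htf
      (Or.inl (S.black_aj'_S' i S.yj'_mem))
  · have hb : G.black.Adj (S.bj' i) S.xj' := by
      rcases htf with ⟨k, hk⟩ | ⟨k, hk⟩
      · exact hk ▸ S.black_aj_xj' k
      · exact hk ▸ S.black_bj_xj' k
    exact S.notTot_bj'_S' i S.xj'_mem (Or.inl hb)

theorem fj'_not_Xj : ∀ t ∈ fenceSet S.aj' S.bj', t ∉ S.Xj := by
  intro t ht hX
  have hb0 : G.black.Adj (S.bj 0) t :=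
    (S.hFj.black_b_out 0 t (S.fj'_disj_fj t ht)).mpr hX
  have hb0f : S.bj 0 ∉ fenceSet S.aj' S.bj' := fun h => S.fj'_disj_fj _ h (S.bj_mem 0)
  rcases ht with ⟨i, hi⟩ | ⟨i, hi⟩
  · subst hi
    rcases (S.hFj'.black_a_out i _ hb0f).mp hb0.symm with h | h
    · exact S.fj_not_Xj' _ (S.bj_mem 0) h
    · rcases h with h | h
      · exact S.xj'_not_fj (h ▸ S.bj_mem 0)
      · exact S.yj'_not_fj (h ▸ S.bj_mem 0)
  · subst hi
    exact S.fj_not_Xj' _ (S.bj_mem 0) ((S.hFj'.black_b_out i _ hb0f).mp hb0.symm)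

theorem S_not_fj' : ∀ z ∈ ({S.xj, S.yj} : Set V), z ∉ fenceSet S.aj' S.bj' := by
  intro z hz hzf
  have ha0 : G.black.Adj (S.aj 0) z := S.black_aj_S 0 hz
  have ha0f : S.aj 0 ∉ fenceSet S.aj' S.bj' := fun h => S.fj'_disj_fj _ h (S.aj_mem 0)
  rcases hzf with ⟨i, hi⟩ | ⟨i, hi⟩
  · subst hi
    rcases (S.hFj'.black_a_out i _ ha0f).mp ha0.symm with h | h
    · exact S.fj_not_Xj' _ (S.aj_mem 0) h
    · rcases h with h | h
      · exact S.xj'_not_fj (h ▸ S.aj_mem 0)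
      · exact S.yj'_not_fj (h ▸ S.aj_mem 0)
  · subst hi
    exact S.fj_not_Xj' _ (S.aj_mem 0) ((S.hFj'.black_b_out i _ ha0f).mp ha0.symm)

theorem notTot_fj'_fj : ∀ t ∈ fenceSet S.aj' S.bj', ∀ z ∈ fenceSet S.aj S.bj,
    ¬ G.TotAdj t z := fun t ht z hz =>
  S.notTot_fj' (fun h => S.fj'_disj_fj z h hz) (S.fj_not_Xj' z hz)
    (fun h => by
      rcases h with h | h
      · exact S.xj'_not_fj (h ▸ hz)
      · exact S.yj'_not_fj (h ▸ hz)) t ht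

end Setup

end Aux

namespace Setup

variable {V : Type} {G : Trigraph V} (S : Setup G)

theorem xj'_ne_xj : S.xj' ≠ S.xj := fun h => S.xj'_not_S (by rw [h]; exact S.xj_mem)
theorem xj'_ne_yj : S.xj' ≠ S.yj := fun h => S.xj'_not_S (by rw [h]; exact S.yj_mem)
theorem yj'_ne_xj : S.yj' ≠ S.xj := fun h => S.yj'_not_S (by rw [h]; exact S.xj_mem)
theorem yj'_ne_yj : S.yj' ≠ S.yj := fun h => S.yj'_not_S (by rw [h]; exact S.yj_mem)
theorem xj_not_fj' : S.xj ∉ fenceSet S.aj' S.bj' := S.S_not_fj' _ S.xj_mem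
theorem yj_not_fj' : S.yj ∉ fenceSet S.aj' S.bj' := S.S_not_fj' _ S.yj_mem

theorem emb_inj : Function.Injective S.emb := by
  intro s t h
  cases s <;> cases t <;> simp only [emb] at h <;>
    first
    | rfl
    | exact congrArg TT.FA (S.hFj.a_inj h)
    | exact congrArg TT.FB (S.hFj.b_inj h)
    | exact congrArg TT.GA (S.hFj'.a_inj h)
    | exact congrArg TT.GB (S.hFj'.b_inj h)
    | exact (S.hxyj h).elim
    | exact (S.hxyj h.symm).elim
    | exact (S.hxyj' h).elim
    | exact (S.hxyj' h.symm).elim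
    | exact (S.xj'_ne_xj h).elim
    | exact (S.xj'_ne_xj h.symm).elim
    | exact (S.xj'_ne_yj h).elim
    | exact (S.xj'_ne_yj h.symm).elim
    | exact (S.yj'_ne_xj h).elim
    | exact (S.yj'_ne_xj h.symm).elim
    | exact (S.yj'_ne_yj h).elim
    | exact (S.yj'_ne_yj h.symm).elim
    | exact (S.hFj.ab_ne _ _ h).elim
    | exact (S.hFj.ab_ne _ _ h.symm).elim
    | exact (S.hFj'.ab_ne _ _ h).elim
    | exact (S.hFj'.ab_ne _ _ h.symm).elim
    | exact (S.xj_not_fj (h ▸ S.aj_mem _)).elim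
    | exact (S.xj_not_fj (h.symm ▸ S.aj_mem _)).elim
    | exact (S.xj_not_fj (h ▸ S.bj_mem _)).elim
    | exact (S.xj_not_fj (h.symm ▸ S.bj_mem _)).elim
    | exact (S.yj_not_fj (h ▸ S.aj_mem _)).elim
    | exact (S.yj_not_fj (h.symm ▸ S.aj_mem _)).elim
    | exact (S.yj_not_fj (h ▸ S.bj_mem _)).elim
    | exact (S.yj_not_fj (h.symm ▸ S.bj_mem _)).elim
    | exact (S.xj'_not_fj (h ▸ S.aj_mem _)).elim
    | exact (S.xj'_not_fj (h.symm ▸ S.aj_mem _)).elim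
    | exact (S.xj'_not_fj (h ▸ S.bj_mem _)).elim
    | exact (S.xj'_not_fj (h.symm ▸ S.bj_mem _)).elim
    | exact (S.yj'_not_fj (h ▸ S.aj_mem _)).elim
    | exact (S.yj'_not_fj (h.symm ▸ S.aj_mem _)).elim
    | exact (S.yj'_not_fj (h ▸ S.bj_mem _)).elim
    | exact (S.yj'_not_fj (h.symm ▸ S.bj_mem _)).elim
    | exact (S.xj_not_fj' (h ▸ S.aj'_mem _)).elim
    | exact (S.xj_not_fj' (h.symm ▸ S.aj'_mem _)).elim
    | exact (S.xj_not_fj' (h ▸ S.bj'_mem _)).elim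
    | exact (S.xj_not_fj' (h.symm ▸ S.bj'_mem _)).elim
    | exact (S.yj_not_fj' (h ▸ S.aj'_mem _)).elim
    | exact (S.yj_not_fj' (h.symm ▸ S.aj'_mem _)).elim
    | exact (S.yj_not_fj' (h ▸ S.bj'_mem _)).elim
    | exact (S.yj_not_fj' (h.symm ▸ S.bj'_mem _)).elim
    | exact (S.xj'_not_fj' (h ▸ S.aj'_mem _)).elim
    | exact (S.xj'_not_fj' (h.symm ▸ S.aj'_mem _)).elim
    | exact (S.xj'_not_fj' (h ▸ S.bj'_mem _)).elim
    | exact (S.xj'_not_fj' (h.symm ▸ S.bj'_mem _)).elim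
    | exact (S.yj'_not_fj' (h ▸ S.aj'_mem _)).elim
    | exact (S.yj'_not_fj' (h.symm ▸ S.aj'_mem _)).elim
    | exact (S.yj'_not_fj' (h ▸ S.bj'_mem _)).elim
    | exact (S.yj'_not_fj' (h.symm ▸ S.bj'_mem _)).elim
    | exact (S.fj'_disj_fj _ (S.aj'_mem _) (h ▸ S.aj_mem _)).elim
    | exact (S.fj'_disj_fj _ (S.aj'_mem _) (h.symm ▸ S.aj_mem _)).elim
    | exact (S.fj'_disj_fj _ (S.aj'_mem _) (h ▸ S.bj_mem _)).elim
    | exact (S.fj'_disj_fj _ (S.aj'_mem _) (h.symm ▸ S.bj_mem _)).elim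
    | exact (S.fj'_disj_fj _ (S.bj'_mem _) (h ▸ S.aj_mem _)).elim
    | exact (S.fj'_disj_fj _ (S.bj'_mem _) (h.symm ▸ S.aj_mem _)).elim
    | exact (S.fj'_disj_fj _ (S.bj'_mem _) (h ▸ S.bj_mem _)).elim
    | exact (S.fj'_disj_fj _ (S.bj'_mem _) (h.symm ▸ S.bj_mem _)).elim

end Setup

namespace Setup

variable {V : Type} {G : Trigraph V} (S : Setup G)

theorem tot_of_lo0 : ∀ s t : TT, TT.lo0 s t = true → G.TotAdj (S.emb s) (S.emb t) := by
  intro s t h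
  cases s <;> cases t <;>
    simp only [TT.lo0, decide_eq_true_eq] at h <;>
    first
    | exact Bool.noConfusion h
    | exact Or.inl ((S.hFj.black_aa _ _).mpr h)
    | exact Or.inl ((S.hFj.black_bb _ _).mpr h)
    | exact Or.inl ((S.hFj'.black_aa _ _).mpr h)
    | exact Or.inl ((S.hFj'.black_bb _ _).mpr h)
    | (rcases h with h | h
       · exact Or.inl ((S.hFj.black_ab _ _).mpr h)
       · exact Or.inr ((S.hFj.red_ab _ _).mpr h))
    | (rcases h with h | h
       · exact Or.inl ((S.hFj'.black_ab _ _).mpr h)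
       · exact Or.inr ((S.hFj'.red_ab _ _).mpr h))
    | exact Or.inl (S.black_aj_S _ S.xj_mem)
    | exact Or.inl (S.black_aj_S _ S.yj_mem)
    | exact Or.inl (S.black_aj_xj' _)
    | exact Or.inl (S.black_bj_xj' _)
    | exact Or.inl (S.black_aj'_S' _ S.xj'_mem)
    | exact Or.inl (S.black_aj'_S' _ S.yj'_mem)
    | exact Or.inl (S.black_xj'_S S.xj_mem).symm
    | exact Or.inl (S.black_xj'_S S.yj_mem).symm

theorem nblack_of_nb0 : ∀ s t : TT, TT.nb0 s t = true → ¬ G.black.Adj (S.emb s) (S.emb t) := by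
  intro s t h
  cases s <;> cases t <;>
    simp only [TT.nb0, decide_eq_true_eq] at h <;>
    first
    | exact Bool.noConfusion h
    | exact fun hb => h ((S.hFj.black_aa _ _).mp hb)
    | exact fun hb => h ((S.hFj.black_bb _ _).mp hb)
    | exact fun hb => h ((S.hFj.black_ab _ _).mp hb)
    | exact fun hb => h ((S.hFj'.black_aa _ _).mp hb)
    | exact fun hb => h ((S.hFj'.black_bb _ _).mp hb)
    | exact fun hb => h ((S.hFj'.black_ab _ _).mp hb)
    | exact fun hb => S.notTot_bj_S _ S.xj_mem (Or.inl hb)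
    | exact fun hb => S.notTot_bj_S _ S.yj_mem (Or.inl hb)
    | exact fun hb => S.notTot_fj S.yj'_not_fj S.yj'_not_Xj S.yj'_not_S _ (S.aj_mem _) (Or.inl hb)
    | exact fun hb => S.notTot_fj S.yj'_not_fj S.yj'_not_Xj S.yj'_not_S _ (S.bj_mem _) (Or.inl hb)
    | exact fun hb => S.notTot_fj'_fj _ (S.aj'_mem _) _ (S.aj_mem _) (Or.inl hb.symm)
    | exact fun hb => S.notTot_fj'_fj _ (S.aj'_mem _) _ (S.bj_mem _) (Or.inl hb.symm)
    | exact fun hb => S.notTot_fj'_fj _ (S.bj'_mem _) _ (S.aj_mem _) (Or.inl hb.symm)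
    | exact fun hb => S.notTot_fj'_fj _ (S.bj'_mem _) _ (S.bj_mem _) (Or.inl hb.symm)
    | exact fun hb => S.notTot_bj'_S' _ S.xj'_mem (Or.inl hb)
    | exact fun hb => S.notTot_bj'_S' _ S.yj'_mem (Or.inl hb)

theorem tot_of_lo {s t : TT} (h : TT.lo s t = true) : G.TotAdj (S.emb s) (S.emb t) := by
  rcases (Bool.or_eq_true _ _).mp h with h' | h'
  · exact S.tot_of_lo0 _ _ h'
  · exact G.totAdj_symm (S.tot_of_lo0 _ _ h')

theorem nblack_of_nb {s t : TT} (h : TT.nb s t = true) :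
    ¬ G.black.Adj (S.emb s) (S.emb t) := by
  rcases (Bool.or_eq_true _ _).mp h with h' | h'
  · exact S.nblack_of_nb0 _ _ h'
  · exact fun hb => S.nblack_of_nb0 _ _ h' hb.symm

end Setup

theorem Trigraph.mergeSetoid_comm {V : Type} (P : Setoid V) (u v : V) :
    Trigraph.mergeSetoid P u v = Trigraph.mergeSetoid P v u := by
  apply Setoid.ext
  intro a b
  show (P.r a b ∨ _ ∨ _) ↔ (P.r a b ∨ _ ∨ _)
  tauto

namespace Setup

variable {V : Type} [Fintype V] {G : Trigraph V} (S : Setup G)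

/-- The invariant: while `xj` and `yj` are separated, the 28 distinguished
vertices lie in pairwise distinct parts. -/
def Inv (P : Setoid V) : Prop :=
  ¬ P.r S.xj S.yj → ∀ s t : TT, P.r (S.emb s) (S.emb t) → s = t

theorem core_aux (P : Setoid V) (u v : V) (huv : ¬ P.r u v)
    (hdeg : (G.quot (Trigraph.mergeSetoid P u v)).RedDegLE 4)
    (hI : ∀ s t : TT, P.r (S.emb s) (S.emb t) → s = t)
    (t1 t2 : TT) (hne : t1 ≠ t2) (h5 : 5 ≤ (TT.DD t1 t2).card)
    (h1 : P.r (S.emb t1) u) (h2 : P.r (S.emb t2) v) : False := by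
  set Q : Setoid V := Trigraph.mergeSetoid P u v with hQdef
  have classEq : ∀ s t : TT, Quotient.mk Q (S.emb s) = Quotient.mk Q (S.emb t) →
      s = t ∨ (s = t1 ∧ t = t2) ∨ (s = t2 ∧ t = t1) := by
    intro s t h
    have h' : Q.r (S.emb s) (S.emb t) := Quotient.exact h
    rcases h' with h' | ⟨ha, hb⟩ | ⟨ha, hb⟩
    · exact Or.inl (hI s t h')
    · exact Or.inr (Or.inl ⟨hI s t1 (P.iseqv.trans ha (P.iseqv.symm h1)),
        hI t t2 (P.iseqv.trans (P.iseqv.symm hb) (P.iseqv.symm h2))⟩)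
    · exact Or.inr (Or.inr ⟨hI s t2 (P.iseqv.trans ha (P.iseqv.symm h2)),
        hI t t1 (P.iseqv.trans (P.iseqv.symm hb) (P.iseqv.symm h1))⟩)
  have hr12 : Q.r (S.emb t1) (S.emb t2) := Or.inr (Or.inl ⟨h1, P.iseqv.symm h2⟩)
  have hmk12 : Quotient.mk Q (S.emb t2) = Quotient.mk Q (S.emb t1) :=
    Quotient.sound (Q.iseqv.symm hr12)
  have hred : ∀ t ∈ TT.DD t1 t2,
      (G.quot Q).red.Adj (Quotient.mk Q (S.emb t1)) (Quotient.mk Q (S.emb t)) := by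
    intro t ht
    rw [TT.DD, Finset.mem_filter] at ht
    obtain ⟨-, htn1, htn2, hlo, hnb⟩ := ht
    show _ ∧ _ ∧ _
    refine ⟨?_, ?_, ?_⟩
    · intro h
      rcases classEq t1 t h with h' | ⟨h', h''⟩ | ⟨h', h''⟩
      · exact htn1 h'.symm
      · exact htn2 h''
      · exact hne h'
    · intro hall
      rcases hnb with hnb | hnb
      · exact S.nblack_of_nb hnb (hall _ _ rfl rfl)
      · exact S.nblack_of_nb hnb (hall _ _ hmk12 rfl)
    · rcases hlo with hlo | hlo
      · exact ⟨S.emb t1, S.emb t, rfl, rfl, S.tot_of_lo hlo⟩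
      · exact ⟨S.emb t2, S.emb t, hmk12, rfl, S.tot_of_lo hlo⟩
  have hinj : Set.InjOn (fun t : TT => Quotient.mk Q (S.emb t)) ↑(TT.DD t1 t2) := by
    intro s hs t ht h
    rw [Finset.mem_coe, TT.DD, Finset.mem_filter] at hs ht
    rcases classEq s t h with h' | ⟨h', h''⟩ | ⟨h', h''⟩
    · exact h'
    · exact absurd h' hs.2.1
    · exact absurd h' hs.2.2.1
  have hsub : (fun t : TT => Quotient.mk Q (S.emb t)) '' ↑(TT.DD t1 t2) ⊆
      (G.quot Q).red.neighborSet (Quotient.mk Q (S.emb t1)) := by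
    rintro _ ⟨t, ht, rfl⟩
    exact hred t (Finset.mem_coe.mp ht)
  have hfin : ((G.quot Q).red.neighborSet (Quotient.mk Q (S.emb t1))).Finite := by
    have : Finite V := Finite.of_fintype V
    have : Finite (Quotient Q) := Quotient.finite _
    exact Set.toFinite _
  have hcard : 5 ≤ ((G.quot Q).red.neighborSet (Quotient.mk Q (S.emb t1))).ncard := by
    calc 5 ≤ (TT.DD t1 t2).card := h5
    _ = (↑(TT.DD t1 t2) : Set TT).ncard := (Set.ncard_coe_finset _).symm
    _ = ((fun t : TT => Quotient.mk Q (S.emb t)) '' ↑(TT.DD t1 t2)).ncard :=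
        (Set.ncard_image_of_injOn hinj).symm
    _ ≤ _ := Set.ncard_le_ncard hsub hfin
  have := hdeg (Quotient.mk Q (S.emb t1))
  omega

theorem stepInv (P Q' : Setoid V) (hms : Trigraph.MergeStep P Q')
    (hdeg : (G.quot Q').RedDegLE 4) (hIP : S.Inv P) : S.Inv Q' := by
  obtain ⟨u, v, huv, rfl⟩ := hms
  intro hsep s t hst
  by_contra hne
  have hPsep : ¬ P.r S.xj S.yj := fun h => hsep (Or.inl h)
  have hI := hIP hPsep
  rcases TT.five s t hne with ⟨rfl, rfl⟩ | ⟨rfl, rfl⟩ | h5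
  · exact hsep hst
  · exact hsep ((Trigraph.mergeSetoid P u v).iseqv.symm hst)
  · rcases hst with h | ⟨ha, hb⟩ | ⟨ha, hb⟩
    · exact hne (hI s t h)
    · exact S.core_aux P u v huv hdeg hI s t hne h5 ha (P.iseqv.symm hb)
    · exact S.core_aux P v u (fun h => huv (P.iseqv.symm h))
        (by rw [Trigraph.mergeSetoid_comm P v u]; exact hdeg) hI s t hne h5 ha
        (P.iseqv.symm hb)

theorem invBot : S.Inv (⊥ : Setoid V) := fun _ s t h => S.emb_inj h

theorem chainInv : ∀ (M : List (Setoid V)) (P0 : Setoid V), S.Inv P0 →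
    List.Chain Trigraph.MergeStep P0 M → (∀ R ∈ M, (G.quot R).RedDegLE 4) →
    ∀ P', (P0 :: M).getLast? = some P' → S.Inv P'
  | [], P0, h0, _, _, P', hl => by
      simp only [List.getLast?_singleton, Option.some.injEq] at hl
      rwa [← hl]
  | R :: M', P0, h0, hc, hdeg, P', hl => by
      simp only [List.Chain, List.isChain_cons_cons] at hc
      refine chainInv M' R (S.stepInv P0 R hc.1 (hdeg R (List.mem_cons_self (a := R) (l := M'))) h0)
        hc.2 (fun R' hR' => hdeg R' (List.mem_cons_of_mem _ hR')) P' ?_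
      rwa [List.getLast?_cons_cons] at hl

end Setup
theorem propagation_forces_guard_contraction {V : Type} [Fintype V] (G : Trigraph V)
    -- the guarding vertical set `V^j`
    (xj yj : V) (aj bj : Fin 6 → V) (Xj : Set V)
    -- the guarded vertical set `V^{j'}`
    (xj' yj' : V) (aj' bj' : Fin 6 → V) (Xj' : Set V)
    (hxyj : xj ≠ yj) (hxyj' : xj' ≠ yj')
    (hFj : FenceAttached G aj bj {xj, yj} Xj)
    (hFj' : FenceAttached G aj' bj' {xj', yj'} Xj')
    -- the propagation gadget from `V^j` to `V^{j'}`: `x^{j'}` is in the set `X` of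
    -- the fence of `V^j`, and `y^{j'}` is in its set `Y`
    (hx' : xj' ∈ Xj)
    (hy' : yj' ∉ fenceSet aj bj ∪ {xj, yj} ∪ Xj)
    (L : List (Setoid V)) (P Q : Setoid V) (u v : V) (huv : ¬ P.r u v)
    (hQ : Q = Trigraph.mergeSetoid P u v)
    (hL : G.IsPartialSeq 4 (L ++ [Q])) (hP : L.getLast? = some P)
    -- the contraction from `P` to `Q` involves a pair of vertices of `V^{j'}`
    (hinv : ∃ f ∈ verticalSet xj' yj' aj' bj', ∃ g ∈ verticalSet xj' yj' aj' bj',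
        (P.r f u ∧ P.r g v) ∨ (P.r f v ∧ P.r g u)) :
    -- then `x^j` and `y^j` lie in a common part (possibly merged by this very
    -- contraction)
    Q.r xj yj := by
  classical
  by_contra hcon
  set SU : Setup G := ⟨xj, yj, xj', yj', aj, bj, aj', bj', Xj, Xj',
    hxyj, hxyj', hFj, hFj', hx', hy'⟩ with hSU
  obtain ⟨f, hf, g, hg, hfg⟩ := hinv
  cases L with
  | nil => simp at hP
  | cons A l =>
    have hhead : A = ⊥ := by
      have h := hL.1.1
      simp only [List.cons_append, List.head?_cons, Option.some.injEq] at h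
      exact h
    have hchain : List.Chain Trigraph.MergeStep A (l ++ [Q]) := hL.1.2
    have hdegs : ∀ R ∈ l ++ [Q], (G.quot R).RedDegLE 4 := fun R hR =>
      hL.2 R (by simpa using Or.inr hR)
    have hIQ : SU.Inv Q := by
      refine SU.chainInv (l ++ [Q]) A (hhead ▸ SU.invBot) hchain hdegs Q ?_
      rw [show A :: (l ++ [Q]) = (A :: l) ++ [Q] from rfl, List.getLast?_concat]
    have hinvQ := hIQ hcon
    have hmem : ∀ z ∈ verticalSet xj' yj' aj' bj', ∃ t : TT, SU.emb t = z := by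
      rintro z ((rfl | rfl) | (⟨i, rfl⟩ | ⟨i, rfl⟩))
      · exact ⟨TT.X0, rfl⟩
      · exact ⟨TT.Y0, rfl⟩
      · exact ⟨TT.GA i, rfl⟩
      · exact ⟨TT.GB i, rfl⟩
    obtain ⟨tf, htf⟩ := hmem f hf
    obtain ⟨tg, htg⟩ := hmem g hg
    have hQfg : Q.r f g := by
      rcases hfg with ⟨h1, h2⟩ | ⟨h1, h2⟩
      · exact hQ ▸ Or.inr (Or.inl ⟨h1, P.iseqv.symm h2⟩)
      · exact hQ ▸ Or.inr (Or.inr ⟨h1, P.iseqv.symm h2⟩)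
    have heq : tf = tg := hinvQ tf tg (by rw [htf, htg]; exact hQfg)
    have hfgeq : f = g := by rw [← htf, ← htg, heq]
    subst hfgeq
    rcases hfg with ⟨h1, h2⟩ | ⟨h1, h2⟩
    · exact huv (P.iseqv.trans (P.iseqv.symm h1) h2)
    · exact huv (P.iseqv.trans (P.iseqv.symm h2) h1)
end
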